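/- arXiv:1101.4292 — 4 statements merged into one kernel-verified Lean document; each statement's English description precedes it below -/
import Mathlib

section
/- For every d ≥ 3, with α := 1/(2^{d−2} − 1), the simplex Δ(d) := {x ∈ ℝ^d : x_i ≥ 0 for 1 ≤ i ≤ d, and x_1/2 + x_2/4 + ⋯ + x_{d−2}/2^{d−2} + x_{d−1}/(2^{d−1} − 1) + x_d/(2^{d−1} + 1 + α) ≤ 1} is hollow: its interior contains no point of ℤ^d. -/
open MeasureTheory
open scoped ENNReal

/-- The set of integer lattice points of `ℝ^d`. -/
def intPts (d : ℕ) : Set (Fin d → ℝ) := {x | ∀ i, ∃ a : ℤ, x i = a}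

/-- The set of points of `s·ℤ^d` inside `ℝ^d`. -/
def sPts (s d : ℕ) : Set (Fin d → ℝ) := {x | ∀ i, ∃ a : ℤ, x i = (s : ℝ) * a}

/-- A lattice polytope: the convex hull of a nonempty finite set of lattice points. -/
def IsLatticePolytope {d : ℕ} (P : Set (Fin d → ℝ)) : Prop :=
  ∃ V : Set (Fin d → ℝ), V.Finite ∧ V.Nonempty ∧ V ⊆ intPts d ∧ P = convexHull ℝ V

/-- Full-dimensionality: the affine span is everything. -/
def IsFullDim {d : ℕ} (P : Set (Fin d → ℝ)) : Prop :=
  affineSpan ℝ P = ⊤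

/-- A set is hollow if its interior contains no lattice point. -/
def Hollow {d : ℕ} (P : Set (Fin d → ℝ)) : Prop :=
  interior P ∩ intPts d = ∅

/-- A set is `s`-hollow if its interior contains no point of `s·ℤ^d`. -/
def SHollow (s : ℕ) {d : ℕ} (P : Set (Fin d → ℝ)) : Prop :=
  interior P ∩ sPts s d = ∅

/-- Unimodular equivalence: an affine bijection of `ℝ^d` preserving `ℤ^d` maps `P` onto `Q`. -/
def UnimodEquiv {d : ℕ} (P Q : Set (Fin d → ℝ)) : Prop :=
  ∃ T : (Fin d → ℝ) ≃ᵃ[ℝ] (Fin d → ℝ), T '' intPts d = intPts d ∧ T '' P = Q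

/-- Lattice width: infimum over nonzero integer directions `u` of `max ⟨u,·⟩ - min ⟨u,·⟩`
(with value `∞` if there is no direction). -/
noncomputable def latticeWidth {n : ℕ} (K : Set (Fin n → ℝ)) : ℝ≥0∞ :=
  ⨅ u : {u : Fin n → ℤ // u ≠ 0},
    ENNReal.ofReal
      (sSup ((fun x => ∑ i, (u.1 i : ℝ) * x i) '' K) -
       sInf ((fun x => ∑ i, (u.1 i : ℝ) * x i) '' K))

/-- `α = 1/(2^(d-2) - 1)`. -/
noncomputable def alphaConst (d : ℕ) : ℝ := 1 / (2 ^ (d - 2) - 1)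

/-- The coefficient of `x_{i+1}` in the defining inequality of the simplex `Δ(d)`:
`x_1/2 + x_2/4 + ⋯ + x_{d-2}/2^{d-2} + x_{d-1}/(2^{d-1}-1) + x_d/(2^{d-1}+1+α) ≤ 1`. -/
noncomputable def coef (d : ℕ) (i : Fin d) : ℝ :=
  if (i : ℕ) < d - 2 then 1 / 2 ^ ((i : ℕ) + 1)
  else if (i : ℕ) = d - 2 then 1 / (2 ^ (d - 1) - 1)
  else 1 / (2 ^ (d - 1) + 1 + alphaConst d)

/-- The simplex `Δ(d)` of Definition 3.1. -/
noncomputable def DeltaPoly (d : ℕ) : Set (Fin d → ℝ) :=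
  {x | (∀ i, 0 ≤ x i) ∧ ∑ i, coef d i * x i ≤ 1}

/-- The coefficient of `x_{i+1}` in the extra inequality
`x_1/2 + ⋯ + x_{d-3}/2^{d-3} + (2x_{d-2} + x_{d-1} + x_d)/(2^{d-1}+1) ≤ 1`. -/
noncomputable def coef2 (d : ℕ) (i : Fin d) : ℝ :=
  if (i : ℕ) < d - 3 then 1 / 2 ^ ((i : ℕ) + 1)
  else if (i : ℕ) = d - 3 then 2 / (2 ^ (d - 1) + 1)
  else 1 / (2 ^ (d - 1) + 1)

lemma two_pow_sub_one_ge (m : ℕ) (hm : 1 ≤ m) : (2:ℝ) ≤ 2 ^ m := by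
  calc (2:ℝ) = 2 ^ 1 := (pow_one 2).symm
  _ ≤ 2 ^ m := by
    apply pow_le_pow_right₀ (by norm_num) hm

lemma coef_pos (d : ℕ) (hd : 3 ≤ d) (i : Fin d) : 0 < coef d i := by
  have h1 : (2:ℝ) ≤ 2 ^ (d-2) := two_pow_sub_one_ge _ (by omega)
  have h2 : (2:ℝ) ≤ 2 ^ (d-1) := two_pow_sub_one_ge _ (by omega)
  have halpha : 0 < alphaConst d := by
    unfold alphaConst
    apply div_pos one_pos; linarith
  unfold coef
  split_ifs
  · positivity
  · apply div_pos one_pos; linarith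
  · apply div_pos one_pos; linarith

lemma key_alg (t : ℝ) (ht : 2 ≤ t) :
    1 - 1/t + 1/(2*t-1) + 1/(2*t+1+1/(t-1)) = 1 := by
  have ht0 : t ≠ 0 := by linarith
  have ht1 : t - 1 ≠ 0 := by intro h; nlinarith
  have ht2 : 2 * t - 1 ≠ 0 := by intro h; nlinarith
  have h4 : 2*t+1+1/(t-1) = t*(2*t-1)/(t-1) := by field_simp; ring
  rw [h4, one_div_div]
  field_simp
  linear_combination inv_mul_cancel₀ ht2

lemma geom_half_sum (m : ℕ) : ∑ k ∈ Finset.range m, (1:ℝ) / 2 ^ (k+1) = 1 - 1 / 2 ^ m := by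
  induction m with
  | zero => simp
  | succ n ih => rw [Finset.sum_range_succ, ih, pow_succ]; ring

lemma sum_coef (d : ℕ) (hd : 3 ≤ d) : ∑ i : Fin d, coef d i = 1 := by
  obtain ⟨m, hm, rfl⟩ : ∃ m, 1 ≤ m ∧ d = m + 2 := ⟨d - 2, by omega, by omega⟩
  have hc : ∀ i : Fin (m+2), coef (m+2) i =
      (fun k : ℕ => if k < m then 1 / 2 ^ (k+1)
        else if k = m then 1 / ((2:ℝ) ^ (m+1) - 1)
        else 1 / ((2:ℝ) ^ (m+1) + 1 + alphaConst (m+2))) (i : ℕ) := by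
    intro i
    unfold coef
    simp only [show m + 2 - 2 = m from rfl, show m + 2 - 1 = m + 1 by omega]
  rw [Finset.sum_congr rfl (fun i _ => hc i),
      Fin.sum_univ_eq_sum_range (fun k : ℕ => if k < m then 1 / 2 ^ (k+1)
        else if k = m then 1 / ((2:ℝ) ^ (m+1) - 1)
        else 1 / ((2:ℝ) ^ (m+1) + 1 + alphaConst (m+2))) (m+2),
      Finset.sum_range_succ, Finset.sum_range_succ]
  simp only [lt_irrefl, if_false, if_pos rfl, Nat.lt_irrefl,
    show ¬ (m + 1 < m) by omega, show ¬ (m + 1 = m) by omega]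
  rw [Finset.sum_congr rfl (fun k hk => if_pos (Finset.mem_range.mp hk))]
  have hgeom : ∑ k ∈ Finset.range m, (1:ℝ) / 2 ^ (k+1) = 1 - 1 / 2 ^ m :=
    geom_half_sum m
  have h1 : (2:ℝ) ^ (m+1) = 2 * 2 ^ m := by rw [pow_succ]; ring
  have ha : alphaConst (m+2) = 1 / ((2:ℝ) ^ m - 1) := by
    unfold alphaConst; rw [show m + 2 - 2 = m from rfl]
  rw [hgeom, h1, ha]
  exact key_alg ((2:ℝ) ^ m) (two_pow_sub_one_ge m hm)

/-- For `d ≥ 3` the simplex `Δ(d)` is hollow. -/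
theorem DeltaPoly_hollow (d : ℕ) (hd : 3 ≤ d) : Hollow (DeltaPoly d) := by
  unfold Hollow
  rw [Set.eq_empty_iff_forall_notMem]
  rintro x ⟨hint, hlat⟩
  obtain ⟨ε, hε, hball⟩ := Metric.isOpen_iff.mp isOpen_interior x hint
  have hball' : Metric.ball x ε ⊆ DeltaPoly d := hball.trans interior_subset
  have hmem : ∀ (j : Fin d) (c : ℝ), |c| < ε →
      Function.update x j (x j + c) ∈ DeltaPoly d := by
    intro j c hc
    apply hball'
    rw [Metric.mem_ball, dist_pi_lt_iff hε]
    intro i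
    rcases eq_or_ne i j with rfl | hij
    · rw [Function.update_self, Real.dist_eq,
        show x i + c - x i = c by ring]
      exact hc
    · rw [Function.update_of_ne hij]
      simpa using hε
  have habs : |(-(ε/2) : ℝ)| < ε := by
    rw [abs_neg, abs_of_pos (by linarith)]; linarith
  have habs' : |(ε/2 : ℝ)| < ε := by
    rw [abs_of_pos (by linarith)]; linarith
  -- every coordinate is at least 1
  have hx1 : ∀ i, 1 ≤ x i := by
    intro i
    obtain ⟨a, ha⟩ := hlat i
    have h := (hmem i (-(ε/2)) habs).1 i
    rw [Function.update_self] at h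
    have hpos : 0 < x i := by linarith
    have hapos : (0:ℤ) < a := by
      have : (0:ℝ) < (a:ℝ) := ha ▸ hpos
      exact_mod_cast this
    have : (1:ℝ) ≤ (a:ℝ) := by exact_mod_cast hapos
    linarith [ha ▸ this]
  -- sum of coefficients against x is at least 1
  have hge : 1 ≤ ∑ i, coef d i * x i := by
    calc (1:ℝ) = ∑ i, coef d i := (sum_coef d hd).symm
    _ = ∑ i, coef d i * 1 := by simp
    _ ≤ ∑ i, coef d i * x i := by
      apply Finset.sum_le_sum
      intro i _
      exact mul_le_mul_of_nonneg_left (hx1 i) (coef_pos d hd i).le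
  -- but pushing one coordinate up stays in the simplex, contradiction
  set j : Fin d := ⟨0, by omega⟩
  have hy := (hmem j (ε/2) habs').2
  have hsum : ∑ i, coef d i * Function.update x j (x j + ε/2) i
      = (∑ i, coef d i * x i) + coef d j * (ε/2) := by
    have key : ∀ i, coef d i * Function.update x j (x j + ε/2) i
        = coef d i * x i + (if i = j then coef d j * (ε/2) else 0) := by
      intro i
      rcases eq_or_ne i j with rfl | hij
      · rw [Function.update_self, if_pos rfl]; ring
      · rw [Function.update_of_ne hij, if_neg hij, add_zero]
    rw [Finset.sum_congr rfl fun i _ => key i, Finset.sum_add_distrib,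
      Finset.sum_ite_eq' Finset.univ j (fun _ => coef d j * (ε/2))]
    simp
  rw [hsum] at hy
  have hcj := coef_pos d hd j
  nlinarith
end

section
/- Let d ≥ 4 and α := 1/(2^{d−2} − 1). Then no integer point x ∈ ℤ^d satisfies simultaneously: x_i ≥ 0 for 1 ≤ i ≤ d; x_1/2 + x_2/4 + ⋯ + x_{d−2}/2^{d−2} + x_{d−1}/(2^{d−1} − 1) + x_d/(2^{d−1} + 1 + α) ≤ 1; and x_1/2 + x_2/4 + ⋯ + x_{d−3}/2^{d−3} + (2x_{d−2} + x_{d−1} + x_d)/(2^{d−1} + 1) > 1. Equivalently, every integer point of the simplex Δ(d) := {x ∈ ℝ^d : x_i ≥ 0, x_1/2 + ⋯ + x_{d−2}/2^{d−2} + x_{d−1}/(2^{d−1}−1) + x_d/(2^{d−1}+1+α) ≤ 1} also satisfies x_1/2 + ⋯ + x_{d−3}/2^{d−3} + (2x_{d−2} + x_{d−1} + x_d)/(2^{d−1} + 1) ≤ 1. -/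
open MeasureTheory
open scoped ENNReal

lemma core (M k y z w : ℤ) (hM : 2 ≤ M) (hk : 0 ≤ k) (hy : 0 ≤ y) (hz : 0 ≤ z) (hw : 0 ≤ w)
    (H : 2*(4*M-1)*k + (4*M-1)*y + 2*M*z + (2*M-1)*w ≤ 2*M*(4*M-1)) :
    (4*M+1)*k + M*(2*y+z+w) ≤ M*(4*M+1) := by
  rcases le_or_gt M k with hMk | hkM
  · have hkM' : k = M := by nlinarith
    subst hkM'
    have hy0 : y = 0 := by nlinarith
    have hz0 : z = 0 := by nlinarith
    have hw0 : w = 0 := by nlinarith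
    subst hy0; subst hz0; subst hw0; ring_nf; omega
  · have hs : (2*M-1)*(2*y+z+w) ≤ 2*(4*M-1)*(M-k) := by nlinarith
    rcases eq_or_lt_of_le hk with hk0 | hk1
    · have hsb : 2*y+z+w ≤ 4*M+1 := by
        by_contra hcon
        push_neg at hcon
        have h2 : 4*M+2 ≤ 2*y+z+w := by omega
        nlinarith
      nlinarith
    · have hsb : 2*y+z+w ≤ 4*(M-k) := by
        by_contra hcon
        push_neg at hcon
        have h2 : 4*(M-k)+1 ≤ 2*y+z+w := by omega
        nlinarith
      nlinarith

lemma key (m : ℕ) (hm : 1 ≤ m) (k y z w : ℤ) (hk : 0 ≤ k) (hy : 0 ≤ y) (hz : 0 ≤ z) (hw : 0 ≤ w)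
    (H : (k:ℝ)/2^m + (1/2^(m+1)) * y + (1/(2^(m+2)-1)) * z
        + (1/(2^(m+2)+1+1/(2^(m+1)-1))) * w ≤ 1) :
    (k:ℝ)/2^m + (2/(2^(m+2)+1)) * y + (1/(2^(m+2)+1)) * z + (1/(2^(m+2)+1)) * w ≤ 1 := by
  have hM2 : (2:ℝ) ≤ 2^m := by
    calc (2:ℝ) = 2^1 := (pow_one 2).symm
    _ ≤ 2^m := by exact pow_le_pow_right₀ one_le_two hm
  set M : ℝ := (2:ℝ)^m with hMdef
  have hMpos : (0:ℝ) < M := by positivity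
  have h2m1 : (2:ℝ)^(m+1) = 2*M := by rw [pow_succ]; ring
  have h2m2 : (2:ℝ)^(m+2) = 4*M := by rw [pow_add]; norm_num; ring
  have hne1 : M ≠ 0 := ne_of_gt hMpos
  have hp2 : (0:ℝ) < 2*M - 1 := by nlinarith
  have hp3 : (0:ℝ) < 4*M - 1 := by nlinarith
  have hp4 : (0:ℝ) < 4*M + 1 := by nlinarith
  have hne2 : 2*M - 1 ≠ 0 := ne_of_gt hp2
  have hne3 : 4*M - 1 ≠ 0 := ne_of_gt hp3
  have hne4 : 4*M + 1 ≠ 0 := ne_of_gt hp4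
  have hiv : (0:ℝ) < 1/(2*M-1) := by positivity
  have hwc : 1/((2:ℝ)^(m+2)+1+1/(2^(m+1)-1)) = (2*M-1)/(2*M*(4*M-1)) := by
    rw [h2m1, h2m2]
    rw [div_eq_div_iff]
    · field_simp
      ring
    · nlinarith
    · nlinarith
  rw [hwc, h2m1, h2m2] at H
  have hD : (0:ℝ) < 2*M*(4*M-1) := by nlinarith
  have Hz : 2*(4*M-1)*k + (4*M-1)*y + 2*M*z + (2*M-1)*w ≤ 2*M*(4*M-1) := by
    have := mul_le_mul_of_nonneg_left H (le_of_lt hD)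
    calc 2*(4*M-1)*(k:ℝ) + (4*M-1)*y + 2*M*z + (2*M-1)*w
        = 2*M*(4*M-1) * ((k:ℝ)/M + (1/(2*M))*y + (1/(4*M-1))*z + ((2*M-1)/(2*M*(4*M-1)))*w) := by
          field_simp
      _ ≤ 2*M*(4*M-1) * 1 := this
      _ = 2*M*(4*M-1) := by ring
  set Mz : ℤ := 2^m with hMzdef
  have hMR : (Mz:ℝ) = M := by rw [hMzdef, hMdef]; push_cast; ring
  rw [← hMR] at Hz
  have HzZ : 2*(4*Mz-1)*k + (4*Mz-1)*y + 2*Mz*z + (2*Mz-1)*w ≤ 2*Mz*(4*Mz-1) := by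
    exact_mod_cast Hz
  have hMz : (2:ℤ) ≤ Mz := by
    rw [hMzdef]
    calc (2:ℤ) = 2^1 := (pow_one 2).symm
    _ ≤ 2^m := by exact pow_le_pow_right₀ one_le_two hm
  have G := core Mz k y z w hMz hk hy hz hw HzZ
  have GR : (4*M+1)*(k:ℝ) + M*(2*(y:ℝ)+z+w) ≤ M*(4*M+1) := by
    rw [← hMR]; exact_mod_cast G
  have hD2 : (0:ℝ) < M*(4*M+1) := by nlinarith
  rw [h2m2]
  rw [← mul_le_mul_iff_right₀ hD2]
  calc M*(4*M+1) * ((k:ℝ)/M + (2/(4*M+1))*y + (1/(4*M+1))*z + (1/(4*M+1))*w)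
      = (4*M+1)*(k:ℝ) + M*(2*y+z+w) := by field_simp; ring
    _ ≤ M*(4*M+1) := GR
    _ = M*(4*M+1) * 1 := by ring

/-- For `d ≥ 4`, every nonnegative integer point of `Δ(d)` satisfies the second
inequality `x_1/2 + ⋯ + x_{d-3}/2^{d-3} + (2x_{d-2} + x_{d-1} + x_d)/(2^{d-1}+1) ≤ 1`. -/
theorem integer_points_satisfy_second_inequality (d : ℕ) (hd : 4 ≤ d) (x : Fin d → ℤ)
    (hnn : ∀ i, 0 ≤ x i) (h1 : ∑ i, coef d i * (x i : ℝ) ≤ 1) :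
    ∑ i, coef2 d i * (x i : ℝ) ≤ 1 := by
  obtain ⟨m, rfl⟩ : ∃ m, d = m + 3 := ⟨d - 3, by omega⟩
  have hm : 1 ≤ m := by omega
  have hd2 : m + 3 - 2 = m + 1 := by omega
  have hd1 : m + 3 - 1 = m + 2 := by omega
  have hd3 : m + 3 - 3 = m := by omega
  -- evaluate alphaConst
  have hal : alphaConst (m+3) = 1/(2^(m+1) - 1) := by rw [alphaConst, hd2]
  -- split sums
  rw [Fin.sum_univ_castSucc, Fin.sum_univ_castSucc, Fin.sum_univ_castSucc] at h1 ⊢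
  -- coefficient evaluations
  have ecA : ∀ i : Fin m, coef (m+3) (i.castSucc.castSucc.castSucc) = 1/2^((i:ℕ)+1) := by
    intro i
    have hv : ((i.castSucc.castSucc.castSucc : Fin (m+3)) : ℕ) = (i : ℕ) := rfl
    rw [coef, hv, if_pos (by omega : (i:ℕ) < m + 3 - 2)]
  have ec2A : ∀ i : Fin m, coef2 (m+3) (i.castSucc.castSucc.castSucc) = 1/2^((i:ℕ)+1) := by
    intro i
    have hv : ((i.castSucc.castSucc.castSucc : Fin (m+3)) : ℕ) = (i : ℕ) := rfl
    rw [coef2, hv, if_pos (by omega : (i:ℕ) < m + 3 - 3)]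
  have ecy : coef (m+3) ((Fin.last m).castSucc.castSucc) = 1/2^(m+1) := by
    have hv : (((Fin.last m).castSucc.castSucc : Fin (m+3)) : ℕ) = m := rfl
    rw [coef, hv, if_pos (by omega : m < m + 3 - 2)]
  have ecz : coef (m+3) ((Fin.last (m+1)).castSucc) = 1/(2^(m+2) - 1) := by
    have hv : (((Fin.last (m+1)).castSucc : Fin (m+3)) : ℕ) = m + 1 := rfl
    rw [coef, hv, if_neg (by omega), if_pos (by omega : m + 1 = m + 3 - 2), hd1]
  have ecw : coef (m+3) (Fin.last (m+2)) = 1/(2^(m+2) + 1 + 1/(2^(m+1)-1)) := by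
    have hv : ((Fin.last (m+2) : Fin (m+3)) : ℕ) = m + 2 := rfl
    rw [coef, hv, if_neg (by omega), if_neg (by omega), hd1, hal]
  have ec2y : coef2 (m+3) ((Fin.last m).castSucc.castSucc) = 2/(2^(m+2) + 1) := by
    have hv : (((Fin.last m).castSucc.castSucc : Fin (m+3)) : ℕ) = m := rfl
    rw [coef2, hv, if_neg (by omega), if_pos (by omega : m = m + 3 - 3), hd1]
  have ec2z : coef2 (m+3) ((Fin.last (m+1)).castSucc) = 1/(2^(m+2) + 1) := by
    have hv : (((Fin.last (m+1)).castSucc : Fin (m+3)) : ℕ) = m + 1 := rfl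
    rw [coef2, hv, if_neg (by omega), if_neg (by omega), hd1]
  have ec2w : coef2 (m+3) (Fin.last (m+2)) = 1/(2^(m+2) + 1) := by
    have hv : ((Fin.last (m+2) : Fin (m+3)) : ℕ) = m + 2 := rfl
    rw [coef2, hv, if_neg (by omega), if_neg (by omega), hd1]
  rw [ecy, ecz, ecw] at h1
  rw [ec2y, ec2z, ec2w]
  rw [Finset.sum_congr rfl (fun i _ => by rw [ecA i])] at h1
  rw [Finset.sum_congr rfl (fun i _ => by rw [ec2A i])]
  -- the common head sum equals k / 2^m
  set k : ℤ := ∑ i : Fin m, 2^(m-1-(i:ℕ)) * x (i.castSucc.castSucc.castSucc) with hkdef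
  have hk : 0 ≤ k := by
    apply Finset.sum_nonneg
    intro i _
    exact mul_nonneg (by positivity) (hnn _)
  have hA : ∑ i : Fin m, 1/2^((i:ℕ)+1) * (x (i.castSucc.castSucc.castSucc) : ℝ)
      = (k:ℝ)/2^m := by
    rw [hkdef]
    push_cast
    rw [Finset.sum_div]
    apply Finset.sum_congr rfl
    intro i _
    have h2 : (2:ℝ)^(m-1-(i:ℕ)) / 2^m = 1/2^((i:ℕ)+1) := by
      rw [div_eq_div_iff (by positivity) (by positivity), one_mul, ← pow_add]
      congr 1
      omega
    rw [mul_comm ((2:ℝ)^(m-1-(i:ℕ))), mul_div_assoc, h2]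
    ring
  rw [hA] at h1 ⊢
  exact key m hm k _ _ _ hk (hnn _) (hnn _) (hnn _) h1
end

section
/- Let d ≥ 4 and α := 1/(2^{d−2} − 1), and let Δ(d) := {x ∈ ℝ^d : x_i ≥ 0 for all i, and x_1/2 + x_2/4 + ⋯ + x_{d−2}/2^{d−2} + x_{d−1}/(2^{d−1} − 1) + x_d/(2^{d−1} + 1 + α) ≤ 1}. Then the integer hull Δ(d)_I := conv(Δ(d) ∩ ℤ^d) equals {x ∈ Δ(d) : x_1/2 + x_2/4 + ⋯ + x_{d−3}/2^{d−3} + (2x_{d−2} + x_{d−1} + x_d)/(2^{d−1} + 1) ≤ 1}, and it also equals the convex hull of the d+2 points {0, 2e_1, 4e_2, …, 2^{d−2}e_{d−2}, (2^{d−1} − 1)e_{d−1}, (2^{d−1} + 1)e_d, e_{d−1} + 2^{d−1}e_d, e_{d−2} + (2^{d−1} − 1)e_d}. -/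
open MeasureTheory
open scoped ENNReal

namespace S18

def idx0 (m : ℕ) : Fin (m+3) := ⟨m, by omega⟩
def idx1 (m : ℕ) : Fin (m+3) := ⟨m+1, by omega⟩
def idx2 (m : ℕ) : Fin (m+3) := ⟨m+2, by omega⟩

noncomputable def Nr (m : ℕ) : ℝ := 2 ^ (m+2)

noncomputable def hed (m : ℕ) (x : Fin (m+3) → ℝ) : ℝ :=
  ∑ i : Fin m, x (Fin.castLE (by omega) i) / 2 ^ ((i:ℕ)+1)

noncomputable def Vset (m : ℕ) : Set (Fin (m+3) → ℝ) :=
  {0}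
    ∪ (Set.range fun i : {i : Fin (m+3) // (i : ℕ) < m+1} =>
        Pi.single i.1 ((2 : ℝ) ^ ((i.1 : ℕ) + 1)))
    ∪ {Pi.single (idx1 m) ((2 : ℝ) ^ (m+2) - 1),
       Pi.single (idx2 m) ((2 : ℝ) ^ (m+2) + 1),
       Pi.single (idx1 m) (1 : ℝ) + Pi.single (idx2 m) ((2 : ℝ) ^ (m+2)),
       Pi.single (idx0 m) (1 : ℝ) + Pi.single (idx2 m) ((2 : ℝ) ^ (m+2) - 1)}

lemma two_le_P (m : ℕ) : (2:ℝ) ≤ 2 ^ (m+1) := by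
  calc (2:ℝ) = 2^1 := by norm_num
  _ ≤ 2^(m+1) := by apply pow_le_pow_right₀ <;> norm_num

lemma Nr_ge (m : ℕ) (hm : 1 ≤ m) : 8 ≤ Nr m := by
  unfold Nr
  calc (8:ℝ) = 2^3 := by norm_num
  _ ≤ 2^(m+2) := by apply pow_le_pow_right₀; norm_num; omega

lemma Nr_eq (m : ℕ) : Nr m = 2 * 2^(m+1) := by
  unfold Nr; rw [pow_succ]; ring

lemma sum_split (m : ℕ) (f : Fin (m+3) → ℝ) :
    ∑ i, f i = (∑ i : Fin m, f (Fin.castLE (by omega) i))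
      + f (idx0 m) + f (idx1 m) + f (idx2 m) := by
  rw [Fin.sum_univ_castSucc, Fin.sum_univ_castSucc, Fin.sum_univ_castSucc]
  rfl

lemma coef_lt (m : ℕ) (i : Fin (m+3)) (h : (i:ℕ) < m+1) :
    coef (m+3) i = 1 / 2 ^ ((i:ℕ)+1) := by
  unfold coef
  rw [if_pos (by omega)]

lemma pow_m2 (m : ℕ) : (2:ℝ)^(m+2) = 2 * 2^(m+1) := by rw [pow_succ]; ring

lemma alg_aux (P : ℝ) (hP : 2 ≤ P) :
    1 / (2*P + 1 + 1/(P - 1)) = (2*P - 2) / ((2*P) * (2*P - 1)) := by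
  have h3 : P - 1 ≠ 0 := by nlinarith
  have h4 : P ≠ 0 := by nlinarith
  have h5 : 2*P - 1 ≠ 0 := by nlinarith
  have h6 : 2*P + 1 + 1/(P-1) ≠ 0 := by
    have h0 : 0 < P - 1 := by linarith
    have : 0 < 1/(P-1) := by positivity
    nlinarith
  have hD : (2*P)*(2*P-1) ≠ 0 := mul_ne_zero (by nlinarith) h5
  rw [div_eq_div_iff h6 hD]
  field_simp
  ring

lemma coef_m1 (m : ℕ) : coef (m+3) (idx1 m) = 1 / (Nr m - 1) := by
  unfold coef idx1 Nr
  rw [if_neg (by simp), if_pos (by simp)]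
  rfl

lemma coef_m2 (m : ℕ) : coef (m+3) (idx2 m) = (Nr m - 2) / (Nr m * (Nr m - 1)) := by
  unfold coef idx2 Nr alphaConst
  rw [if_neg (by simp), if_neg (by simp)]
  have h1 : (m+3-2) = m+1 := rfl
  have h2 : (m+3-1) = m+2 := rfl
  rw [h1, h2, pow_m2 m]
  exact alg_aux _ (two_le_P m)

lemma S1_split (m : ℕ) (x : Fin (m+3) → ℝ) :
    ∑ i, coef (m+3) i * x i
      = hed m x + x (idx0 m) / 2^(m+1) + x (idx1 m) / (Nr m - 1)
        + x (idx2 m) * ((Nr m - 2) / (Nr m * (Nr m - 1))) := by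
  rw [sum_split m (fun i => coef (m+3) i * x i)]
  have he : (∑ i : Fin m, coef (m+3) (Fin.castLE (by omega) i) * x (Fin.castLE (by omega) i))
      = hed m x := by
    unfold hed
    apply Finset.sum_congr rfl
    intro i _
    rw [coef_lt m _ (by rw [Fin.coe_castLE]; omega)]
    rw [Fin.coe_castLE]
    ring
  have h0 : coef (m+3) (idx0 m) = 1/2^(m+1) := by
    rw [coef_lt m (idx0 m) (by simp [idx0])]
    simp [idx0]
  rw [he, h0, coef_m1, coef_m2]
  ring

lemma S2_split (m : ℕ) (x : Fin (m+3) → ℝ) :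
    ∑ i, coef2 (m+3) i * x i
      = hed m x + x (idx0 m) * (2 / (Nr m + 1)) + x (idx1 m) * (1 / (Nr m + 1))
        + x (idx2 m) * (1 / (Nr m + 1)) := by
  rw [sum_split m (fun i => coef2 (m+3) i * x i)]
  have he : (∑ i : Fin m, coef2 (m+3) (Fin.castLE (by omega) i) * x (Fin.castLE (by omega) i))
      = hed m x := by
    unfold hed
    apply Finset.sum_congr rfl
    intro i _
    unfold coef2
    rw [if_pos (by rw [Fin.coe_castLE]; omega), Fin.coe_castLE]
    ring
  have h0 : coef2 (m+3) (idx0 m) = 2/(Nr m + 1) := by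
    unfold coef2 idx0 Nr
    rw [if_neg (by simp), if_pos (by simp)]
    rfl
  have h1 : coef2 (m+3) (idx1 m) = 1/(Nr m + 1) := by
    unfold coef2 idx1 Nr
    rw [if_neg (by simp), if_neg (by simp)]
    rfl
  have h2 : coef2 (m+3) (idx2 m) = 1/(Nr m + 1) := by
    unfold coef2 idx2 Nr
    rw [if_neg (by simp), if_neg (by simp)]
    rfl
  rw [he, h0, h1, h2]
  ring

end S18

namespace S18

lemma key_int (n L a b c : ℤ) (hn : 8 ≤ n) (hL : 0 ≤ L) (ha : 0 ≤ a) (hb : 0 ≤ b) (hc : 0 ≤ c)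
    (H : 4*L*(n-1) + 2*a*(n-1) + n*b + c*(n-2) ≤ n*(n-1)) :
    4*L*(n+1) + 2*a*n + n*b + n*c ≤ n*(n+1) := by
  rcases le_or_gt (4*L + a + c) n with h | h
  · nlinarith
  · have hcge : n + 1 - 4*L - a ≤ c := by omega
    have hx : 0 ≤ (n-2) * (c - (n+1-4*L-a)) :=
      mul_nonneg (by linarith) (by linarith)
    have h1 : 4*L + a*n + n*b ≤ 2 := by nlinarith
    have han : 8*a ≤ a*n := by nlinarith
    have hbn : 8*b ≤ n*b := by nlinarith
    have hL0 : L = 0 := by omega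
    have ha0 : a = 0 := by omega
    have hb0 : b = 0 := by omega
    subst hL0 ha0 hb0
    have hc1 : c ≤ n + 1 := by
      by_contra h2
      push_neg at h2
      have : n + 2 ≤ c := by omega
      nlinarith
    nlinarith

lemma intSubQ (m : ℕ) (hm : 1 ≤ m) :
    DeltaPoly (m+3) ∩ intPts (m+3)
      ⊆ {x | x ∈ DeltaPoly (m+3) ∧ ∑ i, coef2 (m+3) i * x i ≤ 1} := by
  rintro x ⟨hxD, hxI⟩
  refine ⟨hxD, ?_⟩
  obtain ⟨hx0, hS1⟩ := hxD
  choose n hn using hxI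
  have hnn : ∀ i, 0 ≤ n i := by
    intro i
    have := hx0 i
    rw [hn i] at this
    exact_mod_cast this
  set N : ℝ := Nr m with hNdef
  have hN8 : (8:ℝ) ≤ N := Nr_ge m hm
  have hN4 : N = 2^m * 4 := by rw [hNdef]; unfold Nr; rw [pow_add]; norm_num
  set L : ℤ := ∑ i : Fin m, n (Fin.castLE (by omega) i) * 2^(m-1-(i:ℕ)) with hLdef
  have hL : 0 ≤ L := by
    apply Finset.sum_nonneg
    intro i _
    exact mul_nonneg (hnn _) (by positivity)
  have hhed : hed m x = (L:ℝ)/2^m := by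
    rw [hLdef]
    push_cast
    rw [Finset.sum_div]
    unfold hed
    apply Finset.sum_congr rfl
    intro i _
    rw [hn]
    rw [div_eq_div_iff (by positivity) (by positivity)]
    rw [mul_assoc, ← pow_add]
    have he : (m-1-(i:ℕ)) + ((i:ℕ)+1) = m := by omega
    rw [he]
  rw [S1_split, hhed, hn (idx0 m), hn (idx1 m), hn (idx2 m)] at hS1
  set a : ℤ := n (idx0 m)
  set b : ℤ := n (idx1 m)
  set c : ℤ := n (idx2 m)
  have hp1 : ((2:ℝ)^m) ≠ 0 := by positivity
  have hp2 : ((2:ℝ)^(m+1)) ≠ 0 := by positivity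
  have hN0 : N ≠ 0 := by nlinarith
  have hN1 : N - 1 ≠ 0 := by nlinarith
  have hNegt : (0:ℝ) < N*(N-1) := by nlinarith
  have h2m : (1:ℝ) ≤ 2^m := by
    have := pow_le_pow_right₀ (by norm_num : (1:ℝ) ≤ 2) (Nat.zero_le m)
    simpa using this
  have hq1 : (2:ℝ)^m*4 - 1 ≠ 0 := by nlinarith
  have hq2 : (2:ℝ)^m*4 ≠ 0 := by positivity
  have hq3 : ((2:ℝ)^m*4)*((2:ℝ)^m*4 - 1) ≠ 0 := mul_ne_zero hq2 hq1
  have hq4 : (2:ℝ)^m*4 + 1 ≠ 0 := by nlinarith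
  have hreal : 4*(L:ℝ)*(N-1) + 2*(a:ℝ)*(N-1) + N*(b:ℝ) + (c:ℝ)*(N-2) ≤ N*(N-1) := by
    have e : 4*(L:ℝ)*(N-1) + 2*(a:ℝ)*(N-1) + N*(b:ℝ) + (c:ℝ)*(N-2)
        = (N*(N-1)) * ((L:ℝ)/2^m + (a:ℝ)/2^(m+1) + (b:ℝ)/(N-1)
            + (c:ℝ)*((N-2)/(N*(N-1)))) := by
      rw [hN4, pow_succ]
      rw [mul_add, mul_add, mul_add, mul_div_assoc', mul_div_assoc', mul_div_assoc', mul_left_comm _ (c:ℝ), mul_div_assoc',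
        div_eq_of_eq_mul hp1, div_eq_of_eq_mul (mul_ne_zero hp1 two_ne_zero), div_eq_of_eq_mul hq1, mul_div_cancel_left₀ _ hq3]
      all_goals ring
    rw [e]
    calc (N*(N-1)) * ((L:ℝ)/2^m + (a:ℝ)/2^(m+1) + (b:ℝ)/(N-1) + (c:ℝ)*((N-2)/(N*(N-1))))
        ≤ (N*(N-1)) * 1 := mul_le_mul_of_nonneg_left hS1 (le_of_lt hNegt)
      _ = N*(N-1) := mul_one _
  set nz : ℤ := 2^(m+2) with hnzdef
  have hcast : ((nz:ℤ):ℝ) = N := by rw [hnzdef, hNdef]; unfold Nr; push_cast; ring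
  have hnz8 : (8:ℤ) ≤ nz := by
    rw [hnzdef]
    calc (8:ℤ) = 2^3 := by norm_num
    _ ≤ 2^(m+2) := by apply pow_le_pow_right₀ (by norm_num); omega
  have Hint : 4*L*(nz-1) + 2*a*(nz-1) + nz*b + c*(nz-2) ≤ nz*(nz-1) := by
    rw [← hcast] at hreal
    exact_mod_cast hreal
  have Gint := key_int nz L a b c hnz8 hL (hnn _) (hnn _) (hnn _) Hint
  have Greal : 4*(L:ℝ)*(N+1) + 2*(a:ℝ)*N + N*(b:ℝ) + N*(c:ℝ) ≤ N*(N+1) := by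
    rw [← hcast]
    exact_mod_cast Gint
  rw [S2_split, hhed, hn (idx0 m), hn (idx1 m), hn (idx2 m)]
  have e2 : (L:ℝ)/2^m + (a:ℝ)*(2/(N+1)) + (b:ℝ)*(1/(N+1)) + (c:ℝ)*(1/(N+1))
      = (4*(L:ℝ)*(N+1) + 2*(a:ℝ)*N + N*(b:ℝ) + N*(c:ℝ)) / (N*(N+1)) := by
    rw [hN4]
    field_simp [hq2, hq4]
  rw [e2, div_le_one (by nlinarith)]
  exact Greal

end S18

namespace S18

lemma sum_comb (d : ℕ) (cf : Fin d → ℝ) (x y : Fin d → ℝ) (s t : ℝ) :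
    ∑ i, cf i * (s • x + t • y) i = s * (∑ i, cf i * x i) + t * (∑ i, cf i * y i) := by
  rw [Finset.mul_sum, Finset.mul_sum, ← Finset.sum_add_distrib]
  apply Finset.sum_congr rfl
  intro i _
  show cf i * (s * x i + t * y i) = _
  ring

lemma Qconvex (d : ℕ) :
    Convex ℝ {x : Fin d → ℝ | x ∈ DeltaPoly d ∧ ∑ i, coef2 d i * x i ≤ 1} := by
  intro x hx y hy s t hs ht hst
  obtain ⟨⟨hx0, hx1⟩, hx2⟩ := hx
  obtain ⟨⟨hy0, hy1⟩, hy2⟩ := hy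
  have k1 : s * (∑ i, coef d i * x i) ≤ s := by
    calc s * (∑ i, coef d i * x i) ≤ s * 1 := mul_le_mul_of_nonneg_left hx1 hs
    _ = s := mul_one s
  have k2 : t * (∑ i, coef d i * y i) ≤ t := by
    calc t * (∑ i, coef d i * y i) ≤ t * 1 := mul_le_mul_of_nonneg_left hy1 ht
    _ = t := mul_one t
  have k3 : s * (∑ i, coef2 d i * x i) ≤ s := by
    calc s * (∑ i, coef2 d i * x i) ≤ s * 1 := mul_le_mul_of_nonneg_left hx2 hs
    _ = s := mul_one s
  have k4 : t * (∑ i, coef2 d i * y i) ≤ t := by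
    calc t * (∑ i, coef2 d i * y i) ≤ t * 1 := mul_le_mul_of_nonneg_left hy2 ht
    _ = t := mul_one t
  refine ⟨⟨?_, ?_⟩, ?_⟩
  · intro i
    show 0 ≤ s * x i + t * y i
    exact add_nonneg (mul_nonneg hs (hx0 i)) (mul_nonneg ht (hy0 i))
  · rw [sum_comb]; linarith
  · rw [sum_comb]; linarith

lemma sum_single (d : ℕ) (f : Fin d → ℝ) (j : Fin d) (v : ℝ) :
    ∑ i, f i * (Pi.single j v : Fin d → ℝ) i = f j * v := by
  rw [Finset.sum_eq_single j]
  · rw [Pi.single_eq_same]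
  · intro i _ hij
    rw [Pi.single_eq_of_ne hij, mul_zero]
  · intro h
    exact absurd (Finset.mem_univ j) h

lemma single_nonneg (d : ℕ) (j : Fin d) (v : ℝ) (hv : 0 ≤ v) (i : Fin d) :
    0 ≤ (Pi.single j v : Fin d → ℝ) i := by
  rcases eq_or_ne i j with h | h
  · subst h; rw [Pi.single_eq_same]; exact hv
  · rw [Pi.single_eq_of_ne h]

lemma single_int (d : ℕ) (j : Fin d) (k : ℤ) :
    (Pi.single j (k:ℝ) : Fin d → ℝ) ∈ intPts d := by
  intro i
  rcases eq_or_ne i j with h | h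
  · subst h; exact ⟨k, by rw [Pi.single_eq_same]⟩
  · exact ⟨0, by rw [Pi.single_eq_of_ne h]; norm_num⟩

lemma add_int {d : ℕ} {x y : Fin d → ℝ} (hx : x ∈ intPts d) (hy : y ∈ intPts d) :
    x + y ∈ intPts d := by
  intro i
  obtain ⟨a, ha⟩ := hx i
  obtain ⟨b, hb⟩ := hy i
  exact ⟨a + b, by rw [Pi.add_apply, ha, hb]; push_cast; ring⟩

lemma four_le_N (m : ℕ) : (4:ℝ) ≤ Nr m := by
  unfold Nr
  calc (4:ℝ) = 2^2 := by norm_num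
  _ ≤ 2^(m+2) := by apply pow_le_pow_right₀ (by norm_num); omega

lemma sum_pair (m : ℕ) (j1 j2 : Fin (m+3)) (v1 v2 : ℝ) :
    ∑ i, coef (m+3) i * (Pi.single j1 v1 + Pi.single j2 v2 : Fin (m+3) → ℝ) i
      = coef (m+3) j1 * v1 + coef (m+3) j2 * v2 := by
  simp only [Pi.add_apply, mul_add]
  rw [Finset.sum_add_distrib, sum_single, sum_single]

lemma coef_idx0 (m : ℕ) : coef (m+3) (idx0 m) = 1/2^(m+1) := by
  rw [coef_lt m (idx0 m) (by simp [idx0])]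
  simp [idx0]

lemma VsubDelta (m : ℕ) : Vset m ⊆ DeltaPoly (m+3) ∩ intPts (m+3) := by
  have hN4 : (4:ℝ) ≤ Nr m := four_le_N m
  have hN0 : Nr m ≠ 0 := by nlinarith
  have hN1 : Nr m - 1 ≠ 0 := by nlinarith
  have hP2 : (2:ℝ) ≤ 2^(m+1) := two_le_P m
  have hNr : (2:ℝ)^(m+2) = Nr m := rfl
  have hNe : Nr m = 2 * 2^(m+1) := Nr_eq m
  rintro x ((h0 | hrange) | hfour)
  · rcases h0 with rfl
    refine ⟨⟨fun i => le_refl 0, by simp⟩, fun i => ⟨0, by simp⟩⟩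
  · obtain ⟨⟨i, hi⟩, rfl⟩ := hrange
    dsimp only
    constructor
    · constructor
      · exact single_nonneg _ i _ (by positivity)
      · rw [sum_single, coef_lt m i hi]
        apply le_of_eq
        rw [one_div, inv_mul_cancel₀ (by positivity)]
    · have hc : (((2:ℤ)^((i:ℕ)+1) : ℤ) : ℝ) = (2:ℝ)^((i:ℕ)+1) := by push_cast; ring
      rw [← hc]
      exact single_int _ i _
  · simp only [Set.mem_insert_iff, Set.mem_singleton_iff] at hfour
    rcases hfour with rfl | rfl | rfl | rfl
    · refine ⟨⟨single_nonneg _ _ _ (by nlinarith), ?_⟩, ?_⟩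
      · rw [sum_single, coef_m1, hNr]
        apply le_of_eq
        rw [one_div, inv_mul_cancel₀ hN1]
      · have hc : (((2:ℤ)^(m+2) - 1 : ℤ) : ℝ) = (2:ℝ)^(m+2) - 1 := by push_cast; ring
        rw [← hc]
        exact single_int _ _ _
    · refine ⟨⟨single_nonneg _ _ _ (by nlinarith), ?_⟩, ?_⟩
      · rw [sum_single, coef_m2, hNr]
        have e : (Nr m - 2)/(Nr m * (Nr m - 1)) * (Nr m + 1)
            = ((Nr m - 2) * (Nr m + 1))/(Nr m * (Nr m - 1)) := by ring
        rw [e, div_le_one (by nlinarith)]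
        nlinarith
      · have hc : (((2:ℤ)^(m+2) + 1 : ℤ) : ℝ) = (2:ℝ)^(m+2) + 1 := by push_cast; ring
        rw [← hc]
        exact single_int _ _ _
    · refine ⟨⟨?_, ?_⟩, ?_⟩
      · intro i
        show 0 ≤ (Pi.single (idx1 m) (1:ℝ) : Fin (m+3) → ℝ) i
          + (Pi.single (idx2 m) ((2:ℝ)^(m+2)) : Fin (m+3) → ℝ) i
        have h1 := single_nonneg _ (idx1 m) (1:ℝ) (by norm_num) i
        have h2 := single_nonneg _ (idx2 m) ((2:ℝ)^(m+2)) (by positivity) i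
        linarith
      · rw [sum_pair, coef_m1, coef_m2, hNr]
        apply le_of_eq
        field_simp
        ring
      · have hc1 : ((1:ℤ):ℝ) = (1:ℝ) := by norm_num
        have hc : (((2:ℤ)^(m+2) : ℤ) : ℝ) = (2:ℝ)^(m+2) := by push_cast; ring
        rw [← hc, ← hc1]
        exact add_int (single_int _ _ _) (single_int _ _ _)
    · refine ⟨⟨?_, ?_⟩, ?_⟩
      · intro i
        show 0 ≤ (Pi.single (idx0 m) (1:ℝ) : Fin (m+3) → ℝ) i
          + (Pi.single (idx2 m) ((2:ℝ)^(m+2) - 1) : Fin (m+3) → ℝ) i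
        have h1 := single_nonneg _ (idx0 m) (1:ℝ) (by norm_num) i
        have h2 := single_nonneg _ (idx2 m) ((2:ℝ)^(m+2) - 1) (by nlinarith) i
        linarith
      · rw [sum_pair, coef_idx0, coef_m2, hNr]
        apply le_of_eq
        rw [hNe]
        have h2 : (2:ℝ)^(m+1) ≠ 0 := by positivity
        have h3 : 2*(2:ℝ)^(m+1) - 1 ≠ 0 := by nlinarith
        rw [show (2*(2:ℝ)^(m+1) - 2)/(2*2^(m+1) * (2*2^(m+1) - 1)) * (2*2^(m+1) - 1)
            = (2*2^(m+1) - 2)/(2*2^(m+1)) by rw [div_mul_eq_mul_div, mul_div_mul_right _ _ h3]]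
        field_simp
        ring
      · have hc1 : ((1:ℤ):ℝ) = (1:ℝ) := by norm_num
        have hc : (((2:ℤ)^(m+2) - 1 : ℤ) : ℝ) = (2:ℝ)^(m+2) - 1 := by push_cast; ring
        rw [← hc, ← hc1]
        exact add_int (single_int _ _ _) (single_int _ _ _)

end S18

namespace S18

noncomputable def zpt (m : ℕ) : Fin (m+3) ⊕ Fin 5 → (Fin (m+3) → ℝ) := Sum.elim
  (fun i => Pi.single i (if (i:ℕ) < m+1 then (2:ℝ)^((i:ℕ)+1) else 0))
  ![0, Pi.single (idx1 m) ((2:ℝ)^(m+2) - 1), Pi.single (idx2 m) ((2:ℝ)^(m+2) + 1),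
    Pi.single (idx1 m) (1:ℝ) + Pi.single (idx2 m) ((2:ℝ)^(m+2)),
    Pi.single (idx0 m) (1:ℝ) + Pi.single (idx2 m) ((2:ℝ)^(m+2) - 1)]

noncomputable def wgt (m : ℕ) (x : Fin (m+3) → ℝ) (l u1 u2 u3 u4 : ℝ) :
    Fin (m+3) ⊕ Fin 5 → ℝ := Sum.elim
  (fun i => if (i:ℕ) < m then x i / 2^((i:ℕ)+1) else if (i:ℕ) = m then l else 0)
  ![1 - (hed m x + l + u1 + u2 + u3 + u4), u1, u2, u3, u4]

lemma zpt_mem (m : ℕ) (k : Fin (m+3) ⊕ Fin 5) : zpt m k ∈ Vset m := by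
  unfold Vset
  rcases k with i | t
  · have hz : zpt m (Sum.inl i) = Pi.single i (if (i:ℕ) < m+1 then (2:ℝ)^((i:ℕ)+1) else 0) := rfl
    rw [hz]
    split_ifs with h
    · exact Set.mem_union_left _ (Set.mem_union_right _ ⟨⟨i, h⟩, rfl⟩)
    · rw [Pi.single_zero]
      exact Set.mem_union_left _ (Set.mem_union_left _ rfl)
  · fin_cases t
    · exact Set.mem_union_left _ (Set.mem_union_left _ rfl)
    · exact Set.mem_union_right _ (by left; rfl)
    · exact Set.mem_union_right _ (by right; left; rfl)
    · exact Set.mem_union_right _ (by right; right; left; rfl)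
    · exact Set.mem_union_right _ (by right; right; right; rfl)

lemma mem_hull (m : ℕ) (x : Fin (m+3) → ℝ) (hx0 : ∀ i, 0 ≤ x i)
    (l u1 u2 u3 u4 : ℝ) (hl : 0 ≤ l) (h1 : 0 ≤ u1) (h2 : 0 ≤ u2) (h3 : 0 ≤ u3) (h4 : 0 ≤ u4)
    (hT : hed m x + l + u1 + u2 + u3 + u4 ≤ 1)
    (hp : x (idx0 m) = l * 2^(m+1) + u4)
    (hq : x (idx1 m) = u1 * (2^(m+2) - 1) + u3)
    (hr : x (idx2 m) = u2 * (2^(m+2) + 1) + u3 * 2^(m+2) + u4 * (2^(m+2) - 1)) :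
    x ∈ convexHull ℝ (Vset m) := by
  classical
  set w := wgt m x l u1 u2 u3 u4 with hwdef
  have hw_inl : ∀ i : Fin (m+3),
      w (Sum.inl i) = if (i:ℕ) < m then x i / 2^((i:ℕ)+1) else if (i:ℕ) = m then l else 0 :=
    fun i => rfl
  have hw0' : w (Sum.inr 0) = 1 - (hed m x + l + u1 + u2 + u3 + u4) := rfl
  have hw1' : w (Sum.inr 1) = u1 := rfl
  have hw2' : w (Sum.inr 2) = u2 := rfl
  have hw3' : w (Sum.inr 3) = u3 := rfl
  have hw4' : w (Sum.inr 4) = u4 := rfl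
  have hw0 : ∀ k, 0 ≤ w k := by
    rintro (i | t)
    · rw [hw_inl]
      split_ifs
      · exact div_nonneg (hx0 _) (by positivity)
      · exact hl
      · exact le_refl 0
    · fin_cases t
      · show 0 ≤ 1 - (hed m x + l + u1 + u2 + u3 + u4); linarith
      · exact h1
      · exact h2
      · exact h3
      · exact h4
  have hsum : ∑ k, w k = 1 := by
    rw [Fintype.sum_sum_type]
    have e1 : ∑ i : Fin (m+3), w (Sum.inl i) = hed m x + l := by
      rw [sum_split m (fun i => w (Sum.inl i))]
      have hA : (∑ i : Fin m, w (Sum.inl (Fin.castLE (by omega) i))) = hed m x := by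
        unfold hed
        apply Finset.sum_congr rfl
        intro i _
        rw [hw_inl, Fin.coe_castLE, if_pos i.isLt]
      have hB : w (Sum.inl (idx0 m)) = l := by
        rw [hw_inl]
        show (if m < m then _ else if m = m then l else 0) = l
        rw [if_neg (lt_irrefl m), if_pos rfl]
      have hC : w (Sum.inl (idx1 m)) = 0 := by
        rw [hw_inl]
        show (if m+1 < m then _ else if m+1 = m then l else 0) = 0
        rw [if_neg (by omega), if_neg (by omega)]
      have hD : w (Sum.inl (idx2 m)) = 0 := by
        rw [hw_inl]
        show (if m+2 < m then _ else if m+2 = m then l else 0) = 0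
        rw [if_neg (by omega), if_neg (by omega)]
      rw [hA, hB, hC, hD]
      ring
    rw [e1, Fin.sum_univ_five, hw0', hw1', hw2', hw3', hw4']
    ring
  have hmem := Finset.centerMass_mem_convexHull (Finset.univ)
    (fun k _ => hw0 k) (by rw [hsum]; norm_num) (fun k _ => zpt_mem m k)
  rw [Finset.centerMass_eq_of_sum_1 _ _ hsum] at hmem
  have hxeq : ∑ k, w k • zpt m k = x := by
    funext j
    rw [Finset.sum_apply]
    simp only [Pi.smul_apply, smul_eq_mul]
    rw [Fintype.sum_sum_type]
    have hzl : ∀ i : Fin (m+3), zpt m (Sum.inl i)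
        = Pi.single i (if (i:ℕ) < m+1 then (2:ℝ)^((i:ℕ)+1) else 0) := fun _ => rfl
    have hinl : ∑ i : Fin (m+3), w (Sum.inl i) * zpt m (Sum.inl i) j
        = w (Sum.inl j) * (if (j:ℕ) < m+1 then (2:ℝ)^((j:ℕ)+1) else 0) := by
      simp only [hzl]
      rw [Finset.sum_eq_single j]
      · rw [Pi.single_eq_same]
      · intro i _ hij
        rw [Pi.single_eq_of_ne (Ne.symm hij), mul_zero]
      · intro h; exact absurd (Finset.mem_univ j) h
    rw [hinl, Fin.sum_univ_five, hw0', hw1', hw2', hw3', hw4']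
    have hz1 : zpt m (Sum.inr 0) = (0 : Fin (m+3) → ℝ) := rfl
    have hz2 : zpt m (Sum.inr 1) = Pi.single (idx1 m) ((2:ℝ)^(m+2) - 1) := rfl
    have hz3 : zpt m (Sum.inr 2) = Pi.single (idx2 m) ((2:ℝ)^(m+2) + 1) := rfl
    have hz4 : zpt m (Sum.inr 3) = Pi.single (idx1 m) (1:ℝ) + Pi.single (idx2 m) ((2:ℝ)^(m+2)) := rfl
    have hz5 : zpt m (Sum.inr 4) = Pi.single (idx0 m) (1:ℝ) + Pi.single (idx2 m) ((2:ℝ)^(m+2) - 1) := rfl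
    rw [hz1, hz2, hz3, hz4, hz5]
    simp only [Pi.add_apply, Pi.zero_apply, Pi.single_apply]
    rcases lt_or_ge (j:ℕ) m with hj | hj
    · rw [hw_inl, if_pos hj]
      have e0 : ¬ j = idx0 m := by
        intro h
        have : (j:ℕ) = m := congrArg Fin.val h
        omega
      have e1 : ¬ j = idx1 m := by
        intro h
        have : (j:ℕ) = m+1 := congrArg Fin.val h
        omega
      have e2 : ¬ j = idx2 m := by
        intro h
        have : (j:ℕ) = m+2 := congrArg Fin.val h
        omega
      rw [if_pos (by omega : (j:ℕ) < m+1), if_neg e1, if_neg e2, if_neg e1, if_neg e2,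
        if_neg e0, if_neg e2]
      field_simp
      ring
    · have hjlt := j.isLt
      rcases (by omega : (j:ℕ) = m ∨ (j:ℕ) = m+1 ∨ (j:ℕ) = m+2) with hv | hv | hv
      · have hj0 : j = idx0 m := Fin.ext hv
        subst hj0
        rw [hw_inl]
        have e1 : ¬ idx0 m = idx1 m := by
          intro h
          have : m = m+1 := congrArg Fin.val h
          omega
        have e2 : ¬ idx0 m = idx2 m := by
          intro h
          have : m = m+2 := congrArg Fin.val h
          omega
        have v0 : ((idx0 m : Fin (m+3)) : ℕ) = m := rfl
        simp only [v0]
        simp only [eq_self_iff_true, if_true, if_neg e1, if_neg e2,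
          if_neg (show ¬ m < m by omega), if_pos (show m < m+1 by omega)]
        rw [hp]; ring
      · have hj0 : j = idx1 m := Fin.ext hv
        subst hj0
        rw [hw_inl]
        have e1 : ¬ idx1 m = idx2 m := by
          intro h
          have : m+1 = m+2 := congrArg Fin.val h
          omega
        have e0 : ¬ idx1 m = idx0 m := by
          intro h
          have : m+1 = m := congrArg Fin.val h
          omega
        have v0 : ((idx1 m : Fin (m+3)) : ℕ) = m+1 := rfl
        simp only [v0]
        simp only [eq_self_iff_true, if_true, if_neg e1, if_neg e0,
          if_neg (show ¬ m+1 < m by omega), if_neg (show ¬ m+1 = m by omega),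
          if_neg (show ¬ m+1 < m+1 by omega)]
        rw [hq]; ring
      · have hj0 : j = idx2 m := Fin.ext hv
        subst hj0
        rw [hw_inl]
        have e1 : ¬ idx2 m = idx1 m := by
          intro h
          have : m+2 = m+1 := congrArg Fin.val h
          omega
        have e0 : ¬ idx2 m = idx0 m := by
          intro h
          have : m+2 = m := congrArg Fin.val h
          omega
        have v0 : ((idx2 m : Fin (m+3)) : ℕ) = m+2 := rfl
        simp only [v0]
        simp only [eq_self_iff_true, if_true, if_neg e1, if_neg e0,
          if_neg (show ¬ m+2 < m by omega), if_neg (show ¬ m+2 = m by omega),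
          if_neg (show ¬ m+2 < m+1 by omega)]
        rw [hr]; ring
  rw [hxeq] at hmem
  exact hmem

end S18

namespace S18

lemma QsubHull (m : ℕ) (hm : 1 ≤ m) :
    {x : Fin (m+3) → ℝ | x ∈ DeltaPoly (m+3) ∧ ∑ i, coef2 (m+3) i * x i ≤ 1}
      ⊆ convexHull ℝ (Vset m) := by
  intro x hx
  obtain ⟨⟨hx0, hS1⟩, hS2⟩ := hx
  rw [S1_split] at hS1
  rw [S2_split] at hS2
  have hP2 : (2:ℝ) ≤ 2^(m+1) := two_le_P m
  have hNe : Nr m = 2 * 2^(m+1) := Nr_eq m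
  rw [hNe] at hS1 hS2
  have hN2 : (2:ℝ)^(m+2) = 2*2^(m+1) := by rw [pow_succ]; ring
  set P := (2:ℝ)^(m+1) with hPdef
  have hPp : (0:ℝ) < P := by linarith
  have hP0 : P ≠ 0 := ne_of_gt hPp
  have h2P1p : (0:ℝ) < 2*P - 1 := by linarith
  have h2P1 : 2*P - 1 ≠ 0 := ne_of_gt h2P1p
  have h2Pp : (0:ℝ) < 2*P := by linarith
  have h2P0 : 2*P ≠ 0 := ne_of_gt h2Pp
  have h2P1p' : (0:ℝ) < 2*P + 1 := by linarith
  have h2P1' : 2*P + 1 ≠ 0 := ne_of_gt h2P1p'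
  set a := x (idx0 m) with hadef
  set b := x (idx1 m) with hbdef
  set c := x (idx2 m) with hcdef
  have ha0 : 0 ≤ a := hx0 _
  have hb0 : 0 ≤ b := hx0 _
  have hc0 : 0 ≤ c := hx0 _
  rcases le_or_gt c (b*(2*P)) with hA | hA
  · refine mem_hull m x hx0 (a/P) ((b - c/(2*P))/(2*P-1)) 0 (c/(2*P)) 0
      (by positivity) ?_ le_rfl (by positivity) le_rfl ?_ ?_ ?_ ?_
    · apply div_nonneg _ (le_of_lt h2P1p)
      rw [sub_nonneg, div_le_iff₀ h2Pp]
      linarith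
    · have key : (b - c/(2*P))/(2*P-1) + c/(2*P)
          = b/(2*P-1) + c*((2*P-2)/((2*P)*(2*P-1))) := by
        field_simp
        ring
      linarith
    · simp only [hN2, ← hPdef, ← hadef, ← hbdef, ← hcdef]
      field_simp
      try ring
    · simp only [hN2, ← hPdef, ← hadef, ← hbdef, ← hcdef]
      field_simp
      try ring
    · simp only [hN2, ← hPdef, ← hadef, ← hbdef, ← hcdef]
      field_simp
      try ring
  · rcases le_or_gt c (b*(2*P) + a*(2*P-1)) with hB | hC
    · refine mem_hull m x hx0 ((a - (c - b*(2*P))/(2*P-1))/P) 0 0 b ((c - b*(2*P))/(2*P-1))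
        ?_ le_rfl le_rfl hb0 ?_ ?_ ?_ ?_ ?_
      · apply div_nonneg _ (le_of_lt hPp)
        rw [sub_nonneg, div_le_iff₀ h2P1p]
        linarith
      · apply div_nonneg _ (le_of_lt h2P1p)
        linarith
      · have key : (a - (c - b*(2*P))/(2*P-1))/P + b + (c - b*(2*P))/(2*P-1)
            = a/P + b/(2*P-1) + c*((2*P-2)/((2*P)*(2*P-1))) := by
          field_simp
          ring
        linarith
      · simp only [hN2, ← hPdef, ← hadef, ← hbdef, ← hcdef]
        field_simp
        try ring
      · simp only [hN2, ← hPdef, ← hadef, ← hbdef, ← hcdef]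
        field_simp
        try ring
      · simp only [hN2, ← hPdef, ← hadef, ← hbdef, ← hcdef]
        field_simp
        try ring
    · refine mem_hull m x hx0 0 0 ((c - b*(2*P) - a*(2*P-1))/(2*P+1)) b a
        le_rfl le_rfl ?_ hb0 ha0 ?_ ?_ ?_ ?_
      · apply div_nonneg _ (le_of_lt h2P1p')
        linarith
      · have key : (c - b*(2*P) - a*(2*P-1))/(2*P+1) + b + a
            = a*(2/(2*P+1)) + b*(1/(2*P+1)) + c*(1/(2*P+1)) := by
          field_simp
          ring
        linarith
      · simp only [hN2, ← hPdef, ← hadef, ← hbdef, ← hcdef]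
        field_simp
        try ring
      · simp only [hN2, ← hPdef, ← hadef, ← hbdef, ← hcdef]
        field_simp
        try ring
      · simp only [hN2, ← hPdef, ← hadef, ← hbdef, ← hcdef]
        field_simp
        try ring

end S18


/-- For `d ≥ 4`, the integer hull of `Δ(d)` equals the subset of `Δ(d)` cut out by
the second inequality, and equals the convex hull of the `d+2` listed lattice points. -/
theorem integer_hull_DeltaPoly (d : ℕ) (hd : 4 ≤ d) :
    convexHull ℝ (DeltaPoly d ∩ intPts d)
      = {x ∈ DeltaPoly d | ∑ i, coef2 d i * x i ≤ 1} ∧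
    convexHull ℝ (DeltaPoly d ∩ intPts d)
      = convexHull ℝ
          ({0}
            ∪ (Set.range fun i : {i : Fin d // (i : ℕ) < d - 2} =>
                Pi.single i.1 ((2 : ℝ) ^ ((i.1 : ℕ) + 1)))
            ∪ {Pi.single (⟨d - 2, by omega⟩ : Fin d) ((2 : ℝ) ^ (d - 1) - 1),
               Pi.single (⟨d - 1, by omega⟩ : Fin d) ((2 : ℝ) ^ (d - 1) + 1),
               Pi.single (⟨d - 2, by omega⟩ : Fin d) (1 : ℝ)
                 + Pi.single (⟨d - 1, by omega⟩ : Fin d) ((2 : ℝ) ^ (d - 1)),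
               Pi.single (⟨d - 3, by omega⟩ : Fin d) (1 : ℝ)
                 + Pi.single (⟨d - 1, by omega⟩ : Fin d) ((2 : ℝ) ^ (d - 1) - 1)}) := by
  obtain ⟨m, rfl⟩ : ∃ m, d = m + 3 := ⟨d - 3, by omega⟩
  have hm : 1 ≤ m := by omega
  have h3 : convexHull ℝ (DeltaPoly (m+3) ∩ intPts (m+3))
      ⊆ {x : Fin (m+3) → ℝ | x ∈ DeltaPoly (m+3) ∧ ∑ i, coef2 (m+3) i * x i ≤ 1} :=
    convexHull_min (S18.intSubQ m hm) (S18.Qconvex (m+3))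
  have h4 := S18.QsubHull m hm
  have h5 : convexHull ℝ (S18.Vset m) ⊆ convexHull ℝ (DeltaPoly (m+3) ∩ intPts (m+3)) :=
    convexHull_mono (S18.VsubDelta m)
  constructor
  · exact Set.Subset.antisymm h3 (h4.trans h5)
  · exact Set.Subset.antisymm (h3.trans h4) h5
end

section
/- Let d ≥ 4 and α := 1/(2^{d−2} − 1), let Δ(d) := {x ∈ ℝ^d : x_i ≥ 0 for all i, and x_1/2 + x_2/4 + ⋯ + x_{d−2}/2^{d−2} + x_{d−1}/(2^{d−1} − 1) + x_d/(2^{d−1} + 1 + α) ≤ 1}, and let Δ(d)_I := conv(Δ(d) ∩ ℤ^d). Then: (1) Δ(d)_I is a full-dimensional hollow lattice polytope; (2) Δ(d)_I ⊊ Δ(d); and (3) Δ(d)_I is not properly contained in any hollow lattice d-polytope, i.e. every lattice d-polytope Q with Δ(d)_I ⊊ Q contains a point of ℤ^d in its interior. -/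
open MeasureTheory
open scoped ENNReal

set_option maxHeartbeats 1000000

namespace HullAux

open Finset


variable {e : ℕ}

/-- abbreviation for `N = 2^(e+1)` as a real. -/
noncomputable def NR (e : ℕ) : ℝ := 2 ^ (e + 1)

lemma NR_ge8 (he : 2 ≤ e) : (8:ℝ) ≤ NR e := by
  have h : (2:ℝ)^3 ≤ 2^(e+1) := by
    apply pow_le_pow_right₀ (by norm_num); omega
  have h3 : ((2:ℝ))^3 = 8 := by norm_num
  rw [NR]; linarith [h, h3.symm.le]

lemma NR_pos : (0:ℝ) < NR e := by rw [NR]; positivity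

lemma coef_lt (i : Fin (e+2)) (h : (i:ℕ) < e) :
    coef (e+2) i = 1 / 2 ^ ((i:ℕ) + 1) := by
  simp only [coef]
  rw [if_pos]; omega

lemma coef_mid (i : Fin (e+2)) (h : (i:ℕ) = e) :
    coef (e+2) i = 1 / (NR e - 1) := by
  simp only [coef, NR]
  rw [if_neg (by omega), if_pos (by omega)]
  norm_num

lemma alpha_eq (he : 2 ≤ e) : alphaConst (e+2) = 2 / (NR e - 2) := by
  have h2 : (4:ℝ) ≤ 2^e := by
    have h : (2:ℝ)^2 ≤ 2^e := by
      apply pow_le_pow_right₀ (by norm_num); omega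
    norm_num at h; exact h
  simp only [alphaConst, NR]
  have he' : (e+2) - 2 = e := by omega
  rw [he']
  have hNe : (2:ℝ)^(e+1) = 2 * 2^e := by ring
  rw [hNe]
  rw [div_eq_div_iff (by linarith) (by linarith)]
  ring

lemma coef_last (he : 2 ≤ e) (i : Fin (e+2)) (h : (i:ℕ) = e+1) :
    coef (e+2) i = (NR e - 2) / (NR e * (NR e - 1)) := by
  have hN := NR_ge8 (e := e) he
  simp only [coef]
  rw [if_neg (by omega), if_neg (by omega), alpha_eq he]
  have h1 : (2:ℝ)^((e+2)-1) = NR e := by norm_num [NR]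
  rw [h1]
  have hd : NR e + 1 + 2/(NR e - 2) = NR e * (NR e - 1) / (NR e - 2) := by
    have h2 : NR e - 2 ≠ 0 := by linarith
    field_simp
    ring
  rw [hd, one_div_div]



variable {e : ℕ}

noncomputable def dlt (e : ℕ) : ℝ := 2 / (NR e * (NR e - 1) * (NR e + 1))

noncomputable def nn (e : ℕ) (i : Fin (e+2)) : ℝ :=
  if (i : ℕ) < e then 2 ^ ((i : ℕ) + 1)
  else if (i : ℕ) = e then NR e - 1 else NR e + 1

lemma dlt_pos (he : 2 ≤ e) : 0 < dlt e := by
  have hN := NR_ge8 (e := e) he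
  rw [dlt]
  apply div_pos (by norm_num)
  have hA : (0:ℝ) < NR e * (NR e - 1) := by nlinarith
  exact mul_pos hA (by linarith)

lemma pow_le_half (i : ℕ) (h : i < e) : (2:ℝ)^(i+1) * 2 ≤ NR e := by
  have h1 : (2:ℝ)^(i+1) ≤ 2^e := pow_le_pow_right₀ (by norm_num) (by omega)
  have : NR e = 2^e * 2 := by rw [NR]; ring
  rw [this]; linarith

lemma pow_pos' (i : ℕ) : (0:ℝ) < 2^(i+1) := by positivity

lemma coef_ge (he : 2 ≤ e) (i : Fin (e+2)) :
    (NR e - 2) / (NR e * (NR e - 1)) ≤ coef (e+2) i := by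
  have hN := NR_ge8 (e := e) he
  obtain h | h | h : (i:ℕ) < e ∨ (i:ℕ) = e ∨ (i:ℕ) = e+1 := by
    have := i.isLt; omega
  · rw [coef_lt i h]
    have h2 := pow_le_half i h
    have h3 := pow_pos' i
    rw [div_le_div_iff₀ (by nlinarith) h3]
    nlinarith
  · rw [coef_mid i h]
    rw [div_le_div_iff₀ (by nlinarith) (by nlinarith)]
    nlinarith
  · rw [coef_last he i h]

lemma coef_ge_mid (he : 2 ≤ e) (i : Fin (e+2)) (h2 : (i:ℕ) ≠ e+1) :
    1 / (NR e - 1) ≤ coef (e+2) i := by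
  have hN := NR_ge8 (e := e) he
  obtain h | h : (i:ℕ) < e ∨ (i:ℕ) = e := by have := i.isLt; omega
  · rw [coef_lt i h]
    have h2 := pow_le_half i h
    have h3 := pow_pos' i
    rw [div_le_div_iff₀ (by nlinarith) h3]
    nlinarith
  · rw [coef_mid i h]

lemma coef_pos (he : 2 ≤ e) (i : Fin (e+2)) : 0 < coef (e+2) i := by
  have hN := NR_ge8 (e := e) he
  have := coef_ge he i
  have h : (0:ℝ) < (NR e - 2) / (NR e * (NR e - 1)) := by
    apply div_pos <;> nlinarith
  linarith

lemma nn_pos (he : 2 ≤ e) (i : Fin (e+2)) : 0 < nn e i := by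
  have hN := NR_ge8 (e := e) he
  rw [nn]
  split_ifs with h1 h2
  · exact pow_pos' _
  · linarith
  · linarith

lemma nn_int (he : 2 ≤ e) (i : Fin (e+2)) : ∃ a : ℤ, nn e i = (a:ℝ) := by
  rw [nn, NR]
  split_ifs
  · exact ⟨2^((i:ℕ)+1), by push_cast; ring⟩
  · exact ⟨2^(e+1) - 1, by push_cast; ring⟩
  · exact ⟨2^(e+1) + 1, by push_cast; ring⟩

lemma coef_mul_nn_le_one (he : 2 ≤ e) (i : Fin (e+2)) :
    coef (e+2) i * nn e i ≤ 1 := by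
  have hN := NR_ge8 (e := e) he
  obtain h | h | h : (i:ℕ) < e ∨ (i:ℕ) = e ∨ (i:ℕ) = e+1 := by
    have := i.isLt; omega
  · rw [coef_lt i h, nn, if_pos h]
    rw [div_mul_eq_mul_div, one_mul, div_le_one (pow_pos' i)]
  · rw [coef_mid i h, nn, if_neg (by omega), if_pos h]
    rw [div_mul_eq_mul_div, one_mul, div_le_one (by linarith)]
  · rw [coef_last he i h, nn, if_neg (by omega), if_neg (by omega)]
    rw [div_mul_eq_mul_div, div_le_one (by nlinarith)]
    nlinarith

lemma inv_nn_eq (he : 2 ≤ e) (i : Fin (e+2)) :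
    1 / nn e i = coef (e+2) i + (if i = Fin.last (e+1) then dlt e else 0) := by
  have hN := NR_ge8 (e := e) he
  have hlast : (i = Fin.last (e+1)) ↔ ((i:ℕ) = e+1) := by
    rw [Fin.ext_iff]; simp [Fin.last]
  obtain h | h | h : (i:ℕ) < e ∨ (i:ℕ) = e ∨ (i:ℕ) = e+1 := by
    have := i.isLt; omega
  · rw [coef_lt i h, nn, if_pos h, if_neg (by rw [hlast]; omega), add_zero]
  · rw [coef_mid i h, nn, if_neg (by omega), if_pos h, if_neg (by rw [hlast]; omega), add_zero]
  · rw [coef_last he i h, nn, if_neg (by omega), if_neg (by omega), if_pos (hlast.mpr h), dlt]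
    have hA : (0:ℝ) < NR e * (NR e - 1) := by nlinarith
    have hB : (0:ℝ) < NR e * (NR e - 1) * (NR e + 1) := mul_pos hA (by linarith)
    rw [div_add_div _ _ (ne_of_gt hA) (ne_of_gt hB),
      div_eq_div_iff (by linarith) (mul_pos hA hB).ne']
    ring

lemma geo (n : ℕ) : ∑ i ∈ Finset.range n, ((1:ℝ)/2)^(i+1) = 1 - (1/2)^n := by
  induction n with
  | zero => simp
  | succ n ih => rw [Finset.sum_range_succ, ih]; ring

lemma sum_coef (he : 2 ≤ e) : ∑ i : Fin (e+2), coef (e+2) i = 1 := by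
  have hN := NR_ge8 (e := e) he
  set f : ℕ → ℝ := fun i => if h : i < e+2 then coef (e+2) ⟨i,h⟩ else 0 with hf
  have h1 : ∑ i : Fin (e+2), coef (e+2) i = ∑ i ∈ Finset.range (e+2), f i := by
    rw [← Fin.sum_univ_eq_sum_range]
    apply Finset.sum_congr rfl
    intro i _
    rw [hf]
    simp only [i.isLt, dif_pos]
  rw [h1, Finset.sum_range_succ, Finset.sum_range_succ]
  have h2 : f (e+1) = (NR e - 2) / (NR e * (NR e - 1)) := by
    rw [hf]; simp only [dif_pos (by omega : e+1 < e+2)]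
    exact coef_last he _ rfl
  have h3 : f e = 1 / (NR e - 1) := by
    rw [hf]; simp only [dif_pos (by omega : e < e+2)]
    exact coef_mid _ rfl
  have h4 : ∑ i ∈ Finset.range e, f i = 1 - (1/2)^e := by
    rw [← geo e]
    apply Finset.sum_congr rfl
    intro i hi
    rw [Finset.mem_range] at hi
    rw [hf]; simp only [dif_pos (by omega : i < e+2)]
    rw [coef_lt _ hi]
    rw [div_pow, one_pow]
  rw [h2, h3, h4]
  have h5 : ((1:ℝ)/2)^e = 2 / NR e := by
    rw [div_pow, one_pow, NR]
    rw [div_eq_div_iff (by positivity) (by positivity)]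
    ring
  rw [h5]
  have hne : NR e ≠ 0 := by linarith
  have hne1 : NR e - 1 ≠ 0 := by linarith
  field_simp
  ring

lemma sum_div_nn (he : 2 ≤ e) (x : Fin (e+2) → ℝ) :
    ∑ k, x k / nn e k = (∑ k, coef (e+2) k * x k) + dlt e * x (Fin.last (e+1)) := by
  have h1 : ∀ k : Fin (e+2), x k / nn e k
      = coef (e+2) k * x k + (if k = Fin.last (e+1) then dlt e * x k else 0) := by
    intro k
    rw [div_eq_mul_one_div, inv_nn_eq he k]
    split_ifs with h <;> ring
  rw [Finset.sum_congr rfl (fun k _ => h1 k), Finset.sum_add_distrib]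
  congr 1
  rw [Finset.sum_ite_eq' Finset.univ (Fin.last (e+1)) (fun k => dlt e * x k)]
  simp






variable {e : ℕ}

lemma delta_convex (d : ℕ) : Convex ℝ (DeltaPoly d) := by
  intro x hx y hy a b ha hb hab
  constructor
  · intro i
    have h1 := hx.1 i
    have h2 := hy.1 i
    simp only [Pi.add_apply, Pi.smul_apply, smul_eq_mul]
    nlinarith
  · have hsum : ∑ i, coef d i * (a • x + b • y) i
        = a * ∑ i, coef d i * x i + b * ∑ i, coef d i * y i := by
      rw [Finset.mul_sum, Finset.mul_sum, ← Finset.sum_add_distrib]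
      apply Finset.sum_congr rfl
      intro i _
      simp only [Pi.add_apply, Pi.smul_apply, smul_eq_mul]
      ring
    rw [hsum]
    nlinarith [hx.2, hy.2]

/-- the lattice point `nn i • eᵢ`. -/
noncomputable def pnt (e : ℕ) (i : Fin (e+2)) : Fin (e+2) → ℝ :=
  fun j => if j = i then nn e i else 0

lemma pnt_mem (he : 2 ≤ e) (i : Fin (e+2)) :
    pnt e i ∈ DeltaPoly (e+2) ∩ intPts (e+2) := by
  refine ⟨⟨fun j => ?_, ?_⟩, fun j => ?_⟩
  · rw [pnt]
    split_ifs
    · exact (nn_pos he i).le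
    · exact le_refl _
  · have h : ∀ j, coef (e+2) j * pnt e i j = if j = i then coef (e+2) i * nn e i else 0 := by
      intro j
      rw [pnt]
      split_ifs with h
      · rw [h]
      · ring
    rw [Finset.sum_congr rfl (fun j _ => h j), Finset.sum_ite_eq' Finset.univ i]
    simpa using coef_mul_nn_le_one he i
  · rw [pnt]
    obtain ⟨a, ha⟩ := nn_int he i
    split_ifs
    · exact ⟨a, ha⟩
    · exact ⟨0, by norm_num⟩

lemma zero_mem : (0 : Fin (e+2) → ℝ) ∈ DeltaPoly (e+2) ∩ intPts (e+2) := by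
  refine ⟨⟨fun j => le_refl _, ?_⟩, fun j => ⟨0, by norm_num⟩⟩
  simp

lemma U_sub (he : 2 ≤ e) :
    {x : Fin (e+2) → ℝ | (∀ k, 0 < x k) ∧ ∑ k, x k / nn e k < 1}
      ⊆ interior (convexHull ℝ (DeltaPoly (e+2) ∩ intPts (e+2))) := by
  apply interior_maximal
  · rintro x ⟨hx1, hx2⟩
    have hws : ∑ o : Option (Fin (e+2)),
        (Option.elim o (1 - ∑ k, x k / nn e k) (fun i => x i / nn e i)) = 1 := by
      rw [Fintype.sum_option]
      simp
    have key := Finset.centerMass_mem_convexHull (t := Finset.univ)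
      (w := fun o : Option (Fin (e+2)) =>
        Option.elim o (1 - ∑ k, x k / nn e k) (fun i => x i / nn e i))
      (z := fun o : Option (Fin (e+2)) => Option.elim o 0 (pnt e))
      (s := DeltaPoly (e+2) ∩ intPts (e+2))
      ?_ ?_ ?_
    · convert key using 1
      rw [Finset.centerMass]
      rw [show ∑ o ∈ Finset.univ, (fun o : Option (Fin (e+2)) =>
        Option.elim o (1 - ∑ k, x k / nn e k) (fun i => x i / nn e i)) o = 1 from hws]
      rw [inv_one, one_smul]
      rw [Fintype.sum_option]
      simp only [Option.elim, smul_zero, zero_add]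
      funext j
      symm
      rw [Finset.sum_apply]
      simp only [Pi.smul_apply]
      have h : ∀ i : Fin (e+2), (x i / nn e i) • pnt e i j
          = if i = j then x i else 0 := by
        intro i
        rw [pnt, smul_eq_mul]
        by_cases h : i = j
        · rw [if_pos h, if_pos h.symm, h, div_mul_cancel₀]
          exact (nn_pos he j).ne'
        · rw [if_neg h, if_neg (fun hh => h hh.symm), mul_zero]
      rw [Finset.sum_congr rfl (fun i _ => h i), Finset.sum_ite_eq' Finset.univ j]
      simp
    · rintro (_|i) _
      · simp only [Option.elim]
        linarith
      · simp only [Option.elim]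
        exact div_nonneg (hx1 i).le (nn_pos he i).le
    · rw [hws]; norm_num
    · rintro (_|i) _
      · exact zero_mem
      · exact pnt_mem he i
  · have h1 : IsOpen {x : Fin (e+2) → ℝ | ∀ k, 0 < x k} := by
      have : {x : Fin (e+2) → ℝ | ∀ k, 0 < x k} = ⋂ k, {x | 0 < x k} := by
        ext x; simp
      rw [this]
      exact isOpen_iInter_of_finite fun k =>
        isOpen_lt continuous_const (continuous_apply k)
    have h2 : IsOpen {x : Fin (e+2) → ℝ | ∑ k, x k / nn e k < 1} :=
      isOpen_lt (continuous_finset_sum _ fun k _ => (continuous_apply k).div_const _)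
        continuous_const
    exact (h1.inter h2)




variable {e : ℕ}

lemma hull_sub_delta : convexHull ℝ (DeltaPoly (e+2) ∩ intPts (e+2)) ⊆ DeltaPoly (e+2) :=
  convexHull_min Set.inter_subset_left (delta_convex _)

lemma hollow_delta (he : 2 ≤ e) : interior (DeltaPoly (e+2)) ∩ intPts (e+2) = ∅ := by
  have hN := NR_ge8 (e := e) he
  rw [Set.eq_empty_iff_forall_notMem]
  rintro x ⟨hxI, hxZ⟩
  rw [mem_interior_iff_mem_nhds, Metric.mem_nhds_iff] at hxI
  obtain ⟨ε, hε, hball⟩ := hxI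
  -- every coordinate is at least ε/2, hence (being ≥ something positive & integer) ≥ 1
  have hcoord : ∀ j, 1 ≤ x j := by
    intro j
    have hy : (fun k => x k - if k = j then ε/2 else 0) ∈ Metric.ball x ε := by
      rw [Metric.mem_ball]
      have : dist (fun k => x k - if k = j then ε/2 else 0) x ≤ ε/2 := by
        rw [dist_pi_le_iff (by linarith)]
        intro k
        rw [Real.dist_eq]
        split_ifs with h
        · rw [show x k - ε/2 - x k = -(ε/2) by ring, abs_neg, abs_of_pos (by linarith)]
        · simp; linarith
      linarith
    have h0 := (hball hy).1 j
    have h0' : (0:ℝ) ≤ x j - ε/2 := by simpa using h0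
    obtain ⟨a, ha⟩ := hxZ j
    have h1 : (0:ℝ) < a := by rw [← ha]; linarith
    have h2 : (1:ℤ) ≤ a := by exact_mod_cast h1
    rw [ha]; exact_mod_cast h2
  have hge1 : 1 ≤ ∑ i, coef (e+2) i * x i := by
    rw [← sum_coef he]
    apply Finset.sum_le_sum
    intro i _
    nlinarith [coef_pos he i, hcoord i]
  -- but we can push a bit in the first coordinate and stay inside
  set j0 : Fin (e+2) := ⟨0, by omega⟩
  have hy : (fun k => x k + if k = j0 then ε/2 else 0) ∈ Metric.ball x ε := by
    rw [Metric.mem_ball]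
    have : dist (fun k => x k + if k = j0 then ε/2 else 0) x ≤ ε/2 := by
      rw [dist_pi_le_iff (by linarith)]
      intro k
      rw [Real.dist_eq]
      split_ifs with h
      · rw [show x k + ε/2 - x k = ε/2 by ring, abs_of_pos (by linarith)]
      · simp; linarith
    linarith
  have h2 := (hball hy).2
  have h3 : ∑ i, coef (e+2) i * (x i + if i = j0 then ε/2 else 0)
      = (∑ i, coef (e+2) i * x i) + coef (e+2) j0 * (ε/2) := by
    have h4 : ∀ i : Fin (e+2), coef (e+2) i * (x i + if i = j0 then ε/2 else 0)
        = coef (e+2) i * x i + (if i = j0 then coef (e+2) i * (ε/2) else 0) := by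
      intro i; split_ifs <;> ring
    rw [Finset.sum_congr rfl (fun i _ => h4 i), Finset.sum_add_distrib,
      Finset.sum_ite_eq' Finset.univ j0]
    simp
  rw [h3] at h2
  nlinarith [coef_pos he j0]

lemma lattice_bound (he : 2 ≤ e) (x : Fin (e+2) → ℝ) (hx : x ∈ DeltaPoly (e+2))
    (j : Fin (e+2)) : x j ≤ NR e + 2 := by
  have hN := NR_ge8 (e := e) he
  have h1 : coef (e+2) j * x j ≤ 1 := by
    calc coef (e+2) j * x j ≤ ∑ i, coef (e+2) i * x i := by
          apply Finset.single_le_sum (f := fun i => coef (e+2) i * x i)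
          · intro i _
            exact mul_nonneg (coef_pos he i).le (hx.1 i)
          · exact Finset.mem_univ j
      _ ≤ 1 := hx.2
  have hD : (0:ℝ) < NR e * (NR e - 1) := by nlinarith
  have h2 : (1:ℝ) ≤ (NR e - 2) / (NR e * (NR e - 1)) * (NR e + 2) := by
    rw [div_mul_eq_mul_div, le_div_iff₀ hD]
    nlinarith
  have h3 := coef_ge he j
  have hcL : (0:ℝ) < (NR e - 2) / (NR e * (NR e - 1)) := by
    apply div_pos (by linarith) hD
  nlinarith [hx.1 j]

lemma V_finite (he : 2 ≤ e) : (DeltaPoly (e+2) ∩ intPts (e+2)).Finite := by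
  have hN := NR_ge8 (e := e) he
  apply Set.Finite.subset
    (Set.Finite.image (f := fun (a : Fin (e+2) → ℤ) => (fun j => (a j : ℝ)))
      (Set.finite_Icc (fun _ => 0) (fun _ => 2^(e+1) + 2)))
  rintro x ⟨hxD, hxZ⟩
  choose ζ hζ using hxZ
  refine ⟨ζ, ⟨?_, ?_⟩, ?_⟩
  · intro j
    have := hxD.1 j
    rw [hζ j] at this
    exact_mod_cast this
  · intro j
    have h1 := lattice_bound he x hxD j
    rw [hζ j] at h1
    have h2 : NR e + 2 = ((2^(e+1) + 2 : ℤ) : ℝ) := by rw [NR]; push_cast; ring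
    rw [h2] at h1
    exact_mod_cast h1
  · funext j
    exact (hζ j).symm

lemma dlt_lt_one (he : 2 ≤ e) : dlt e < 1 := by
  have hN := NR_ge8 (e := e) he
  have hA : (0:ℝ) < NR e * (NR e - 1) := by nlinarith
  have h56 : (56:ℝ) ≤ NR e * (NR e - 1) := by nlinarith
  have hB : (0:ℝ) < NR e * (NR e - 1) * (NR e + 1) := mul_pos hA (by linarith)
  rw [dlt, div_lt_one hB]
  nlinarith [mul_le_mul_of_nonneg_right h56 (show (0:ℝ) ≤ NR e + 1 by linarith)]

lemma half_mem (he : 2 ≤ e) :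
    (fun _ => (1:ℝ)/2) ∈ interior (convexHull ℝ (DeltaPoly (e+2) ∩ intPts (e+2))) := by
  apply U_sub he
  constructor
  · intro k; norm_num
  · rw [sum_div_nn he]
    have h1 : ∑ k : Fin (e+2), coef (e+2) k * (1/2) = 1/2 := by
      rw [← Finset.sum_mul, sum_coef he]; norm_num
    rw [h1]
    have := dlt_lt_one he
    have := dlt_pos he
    linarith

lemma full_dim (he : 2 ≤ e) :
    affineSpan ℝ (convexHull ℝ (DeltaPoly (e+2) ∩ intPts (e+2))) = ⊤ := by
  rw [← Convex.interior_nonempty_iff_affineSpan_eq_top (convex_convexHull ℝ _)]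
  exact ⟨_, half_mem he⟩

lemma alpha_pos (he : 2 ≤ e) : 0 < alphaConst (e+2) ∧ alphaConst (e+2) < 1 := by
  have h2 : (4:ℝ) ≤ 2^e := by
    have h : (2:ℝ)^2 ≤ 2^e := pow_le_pow_right₀ (by norm_num) (by omega)
    norm_num at h; exact h
  rw [alphaConst, show (e+2)-2 = e from by omega]
  constructor
  · apply div_pos (by norm_num); linarith
  · rw [div_lt_one (by linarith)]; linarith

lemma coef_last' (he : 2 ≤ e) (i : Fin (e+2)) (h : (i:ℕ) = e+1) :
    coef (e+2) i = 1 / (NR e + 1 + alphaConst (e+2)) := by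
  simp only [coef]
  rw [if_neg (by omega), if_neg (by omega), NR, show (e+2)-1 = e+1 from by omega]

lemma strict_sub (he : 2 ≤ e) :
    convexHull ℝ (DeltaPoly (e+2) ∩ intPts (e+2)) ⊂ DeltaPoly (e+2) := by
  have hN := NR_ge8 (e := e) he
  obtain ⟨hα, hα1⟩ := alpha_pos (e := e) he
  rw [Set.ssubset_iff_of_subset hull_sub_delta]
  set L : Fin (e+2) := Fin.last (e+1)
  have hL : (L : ℕ) = e + 1 := rfl
  set v : Fin (e+2) → ℝ := fun j => if j = L then NR e + 1 + alphaConst (e+2) else 0 with hv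
  refine ⟨v, ⟨?_, ?_⟩, ?_⟩
  · intro i
    by_cases h : i = L
    · simp only [hv, if_pos h]
      linarith
    · simp only [hv, if_neg h]
      exact le_refl _
  · have h4 : ∀ i : Fin (e+2), coef (e+2) i * v i
        = if i = L then 1 else 0 := by
      intro i
      by_cases h : i = L
      · subst h
        simp only [hv, if_pos rfl]
        rw [coef_last' he L hL]
        field_simp
        simp
      · simp only [hv, if_neg h, mul_zero]
    rw [Finset.sum_congr rfl (fun i _ => h4 i), Finset.sum_ite_eq' Finset.univ L]
    simp
  · -- v is not in the convex hull, since the hull satisfies x L ≤ NR+1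
    intro hvI
    have hsub : convexHull ℝ (DeltaPoly (e+2) ∩ intPts (e+2))
        ⊆ {x : Fin (e+2) → ℝ | x L ≤ NR e + 1} := by
      apply convexHull_min
      · rintro z ⟨hzD, hzZ⟩
        have h1 : coef (e+2) L * z L ≤ 1 := by
          calc coef (e+2) L * z L ≤ ∑ i, coef (e+2) i * z i := by
                apply Finset.single_le_sum (f := fun i => coef (e+2) i * z i)
                · intro i _
                  exact mul_nonneg (coef_pos he i).le (hzD.1 i)
                · exact Finset.mem_univ L
            _ ≤ 1 := hzD.2
        rw [coef_last' he L hL] at h1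
        have h2 : z L ≤ NR e + 1 + alphaConst (e+2) := by
          rw [div_mul_eq_mul_div, div_le_one (by linarith)] at h1
          linarith
        obtain ⟨a, ha⟩ := hzZ L
        have h3 : (a:ℝ) < ((2^(e+1) + 2 : ℤ):ℝ) := by
          push_cast
          rw [← ha, show ((2:ℝ)^(e+1)) = NR e from rfl]
          linarith
        have h4 : (a:ℤ) ≤ 2^(e+1) + 1 := by
          have h6 : (a:ℤ) < 2^(e+1) + 2 := by exact_mod_cast h3
          have h7 := Int.lt_iff_add_one_le.mp h6
          linarith
        show z L ≤ NR e + 1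
        rw [ha]
        have h5 : ((a:ℤ):ℝ) ≤ ((2^(e+1) + 1 : ℤ):ℝ) := by exact_mod_cast h4
        rw [show ((2^(e+1) + 1 : ℤ):ℝ) = NR e + 1 from by rw [NR]; push_cast; ring] at h5
        exact h5
      · intro x hx y hy a b ha hb hab
        simp only [Set.mem_setOf_eq] at *
        have : (a • x + b • y) L = a * x L + b * y L := by
          simp [Pi.add_apply, Pi.smul_apply]
        rw [this]
        nlinarith
    have hle := hsub hvI
    rw [Set.mem_setOf_eq] at hle
    have h9 : v L = NR e + 1 + alphaConst (e+2) := by simp [hv]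
    rw [h9] at hle
    linarith




variable {e : ℕ}

lemma H_lower (he : 2 ≤ e) (z : Fin (e+2) → ℝ) (hzZ : ∀ j, ∃ a : ℤ, z j = a)
    (hH : 1 < ∑ k, coef (e+2) k * z k) :
    1 + (NR e + 1) * dlt e ≤ ∑ k, coef (e+2) k * z k := by
  have hN := NR_ge8 (e := e) he
  have hA : (0:ℝ) < NR e * (NR e - 1) := by nlinarith
  choose ζ hζ using hzZ
  set NZ : ℤ := 2^(e+1) with hNZ
  have hNR : (NZ:ℝ) = NR e := by rw [hNZ, NR]; push_cast; ring
  set g : Fin (e+2) → ℤ := fun k =>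
    if (k:ℕ) < e then 2^(e - (k:ℕ)) * (NZ - 1) else if (k:ℕ) = e then NZ else NZ - 2
    with hg
  have hgval : ∀ k : Fin (e+2), NR e * (NR e - 1) * coef (e+2) k = (g k : ℝ) := by
    intro k
    obtain h | h | h : (k:ℕ) < e ∨ (k:ℕ) = e ∨ (k:ℕ) = e+1 := by
      have := k.isLt; omega
    · rw [coef_lt k h]
      simp only [hg, if_pos h]
      have hsplit : NR e = 2^((k:ℕ)+1) * 2^(e - (k:ℕ)) := by
        rw [NR, ← pow_add]
        congr 1
        omega
      have hp : (0:ℝ) < 2^((k:ℕ)+1) := by positivity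
      push_cast
      rw [hNR] at *
      field_simp
      rw [hsplit]
      ring
    · rw [coef_mid k h]
      simp only [hg, if_neg (show ¬((k:ℕ) < e) by omega), if_pos h]
      rw [hNR]
      rw [mul_one_div]
      exact mul_div_cancel_right₀ (NR e) (show NR e - 1 ≠ 0 by nlinarith)
    · rw [coef_last he k h]
      simp only [hg, if_neg (show ¬((k:ℕ) < e) by omega),
        if_neg (show ¬((k:ℕ) = e) by omega)]
      push_cast
      rw [hNR]
      rw [mul_div_assoc', mul_comm, mul_div_assoc, div_self hA.ne', mul_one]
  have hgeven : ∀ k : Fin (e+2), 2 ∣ g k := by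
    intro k
    simp only [hg]
    split_ifs with h1 h2
    · have : (2:ℤ)^(e - (k:ℕ)) = 2 * 2^(e - (k:ℕ) - 1) := by
        rw [← pow_succ']
        congr 1
        omega
      exact Dvd.dvd.mul_right ⟨2^(e - (k:ℕ) - 1), this⟩ _
    · exact ⟨2^e, by rw [hNZ]; ring⟩
    · exact ⟨2^e - 1, by rw [hNZ]; ring⟩
  set M : ℤ := ∑ k, g k * ζ k with hM
  have hMval : NR e * (NR e - 1) * (∑ k, coef (e+2) k * z k) = (M:ℝ) := by
    rw [hM, Finset.mul_sum]
    push_cast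
    apply Finset.sum_congr rfl
    intro k _
    rw [hζ k, ← mul_assoc, hgval k]
  have hMeven : 2 ∣ M := by
    rw [hM]
    exact Finset.dvd_sum fun k _ => Dvd.dvd.mul_right (hgeven k) _
  have hPeven : 2 ∣ NZ * (NZ - 1) := Dvd.dvd.mul_right ⟨2^e, by rw [hNZ]; ring⟩ _
  have hMgt : NZ * (NZ - 1) < M := by
    have h1 : NR e * (NR e - 1) * 1 < (M:ℝ) := by
      rw [← hMval]
      exact mul_lt_mul_of_pos_left hH hA
    have h2 : ((NZ * (NZ - 1) : ℤ) : ℝ) < (M:ℝ) := by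
      push_cast
      rw [hNR]
      linarith
    exact_mod_cast h2
  have hMge : NZ * (NZ - 1) + 2 ≤ M := by omega
  have hcast : NR e * (NR e - 1) + 2 ≤ (M:ℝ) := by
    have : ((NZ * (NZ - 1) + 2 : ℤ) : ℝ) ≤ (M:ℝ) := by exact_mod_cast hMge
    push_cast at this
    rw [hNR] at this
    linarith
  have hdid : (NR e + 1) * dlt e = 2 / (NR e * (NR e - 1)) := by
    rw [dlt]
    field_simp
  rw [hdid]
  have h2A : 2 / (NR e * (NR e - 1)) ≤ (∑ k, coef (e+2) k * z k) - 1 := by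
    rw [div_le_iff₀ hA]
    nlinarith [hcast]
  linarith



variable {e : ℕ}

/-- case b, per coordinate bound -/
lemma key_b (he : 2 ≤ e) (z : Fin (e+2) → ℝ) (hzZ : ∀ j, ∃ a : ℤ, z j = a)
    (hz0 : ∀ j, 0 ≤ z j) (hH : 1 < ∑ k, coef (e+2) k * z k) (k : Fin (e+2)) :
    dlt e * (z k - 1) <
      (∑ k, coef (e+2) k * z k) - 1 + dlt e * z (Fin.last (e+1)) - dlt e := by
  have hN := NR_ge8 (e := e) he
  have hdlt := dlt_pos (e := e) he
  have hlow := H_lower he z hzZ hH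
  by_cases hkL : k = Fin.last (e+1)
  · rw [hkL]
    nlinarith
  · -- k is not the last coordinate
    have hkL' : (k:ℕ) ≠ e+1 := by
      intro hc
      exact hkL (Fin.ext hc)
    obtain ⟨a, ha⟩ := hzZ k
    have hZL := hz0 (Fin.last (e+1))
    obtain hsmall | hbig : z k ≤ NR e ∨ NR e + 1 ≤ z k := by
      have h1 : (NR e : ℝ) = ((2^(e+1) : ℤ) : ℝ) := by rw [NR]; push_cast; ring
      obtain h | h : a ≤ 2^(e+1) ∨ 2^(e+1) + 1 ≤ a := by omega
      · left; rw [ha, h1]; exact_mod_cast h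
      · right; rw [ha, h1]
        have : ((2^(e+1) + 1 : ℤ):ℝ) ≤ (a:ℝ) := by exact_mod_cast h
        push_cast at this ⊢
        linarith
    · -- small coordinate: use H ≥ 1 + (N+1)δ
      nlinarith [mul_le_mul_of_nonneg_left hsmall hdlt.le, mul_nonneg hdlt.le hZL]
    · -- big coordinate
      have hc := coef_ge_mid he k hkL'
      have hA : (0:ℝ) < NR e * (NR e - 1) := by nlinarith
      have h10 : (1:ℝ) < (1/(NR e - 1) - dlt e) * (NR e + 1) := by
        have hne0 : NR e ≠ 0 := by nlinarith
        have hne1 : NR e - 1 ≠ 0 := by nlinarith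
        have hne2 : NR e + 1 ≠ 0 := by nlinarith
        have hid : (1/(NR e - 1) - dlt e) * (NR e + 1)
            = (NR e * (NR e + 1) - 2) / (NR e * (NR e - 1)) := by
          rw [dlt]
          field_simp
        rw [hid, lt_div_iff₀ hA]
        nlinarith
      have hpos : (0:ℝ) < 1/(NR e - 1) - dlt e := by
        nlinarith
      have h11 : (1:ℝ) < (coef (e+2) k - dlt e) * z k := by
        calc (1:ℝ) < (1/(NR e - 1) - dlt e) * (NR e + 1) := h10
          _ ≤ (coef (e+2) k - dlt e) * z k := by
              apply mul_le_mul (by linarith) hbig (by linarith) (by linarith)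
      -- coef k * z k ≤ H
      have h12 : coef (e+2) k * z k ≤ ∑ i, coef (e+2) i * z i := by
        apply Finset.single_le_sum (f := fun i => coef (e+2) i * z i)
        · intro i _
          exact mul_nonneg (coef_pos he i).le (hz0 i)
        · exact Finset.mem_univ k
      nlinarith

/-- combination formula for sums over scaled differences -/
lemma sum_div_comb (he : 2 ≤ e) (t : ℝ) (w z : Fin (e+2) → ℝ) :
    ∑ k, (w k + t * (w k - z k)) / nn e k
      = (∑ k, w k / nn e k) + t * ((∑ k, w k / nn e k) - ∑ k, z k / nn e k) := by
  have h1 : ∀ k : Fin (e+2), (w k + t * (w k - z k)) / nn e k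
      = w k / nn e k + t * (w k / nn e k - z k / nn e k) := by
    intro k
    have := (nn_pos he k).ne'
    field_simp
    try ring
  rw [Finset.sum_congr rfl (fun k _ => h1 k), Finset.sum_add_distrib]
  congr 1
  rw [← Finset.mul_sum, Finset.sum_sub_distrib]

lemma maximal_aux (he : 2 ≤ e) (Q : Set (Fin (e+2) → ℝ)) (hQconv : Convex ℝ Q)
    (hQsub : convexHull ℝ (DeltaPoly (e+2) ∩ intPts (e+2)) ⊆ Q)
    (z : Fin (e+2) → ℝ) (hzQ : z ∈ Q) (hzZ : z ∈ intPts (e+2))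
    (hzD : z ∉ DeltaPoly (e+2)) :
    (interior Q ∩ intPts (e+2)).Nonempty := by
  have hN := NR_ge8 (e := e) he
  have hdlt := dlt_pos (e := e) he
  have hUQ : {x : Fin (e+2) → ℝ | (∀ k, 0 < x k) ∧ ∑ k, x k / nn e k < 1}
      ⊆ interior Q := (U_sub he).trans (interior_mono hQsub)
  -- main reduction: find a lattice point w and t > 0 with w + t(w - z) ∈ U
  have main : ∀ (w : Fin (e+2) → ℝ) (t : ℝ), 0 < t → (∀ j, ∃ a : ℤ, w j = a) →
      ((∀ k, 0 < w k + t * (w k - z k)) ∧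
        ∑ k, (w k + t * (w k - z k)) / nn e k < 1) →
      (interior Q ∩ intPts (e+2)).Nonempty := by
    intro w t ht hwZ hc
    set c : Fin (e+2) → ℝ := fun j => w j + t * (w j - z j) with hcdef
    have hcU : c ∈ interior Q := hUQ ⟨fun k => hc.1 k, hc.2⟩
    have hw : w = (1/(1+t)) • c + (t/(1+t)) • z := by
      funext j
      simp only [Pi.add_apply, Pi.smul_apply, smul_eq_mul, hcdef]
      have h1t : (1:ℝ) + t ≠ 0 := by linarith
      field_simp
      ring
    have hmem : w ∈ interior Q := by
      rw [hw]
      apply hQconv.combo_interior_closure_mem_interior hcU (subset_closure hzQ)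
      · positivity
      · positivity
      · have h1t : (1:ℝ) + t ≠ 0 := by linarith
        field_simp
    exact ⟨w, hmem, hwZ⟩
  by_cases hneg : ∃ j, z j < 0
  · -- case (a): some coordinate negative
    obtain ⟨j, hj⟩ := hneg
    set w : Fin (e+2) → ℝ := fun k => if k = j then 0 else 1 with hwdef
    have hwZ : ∀ k, ∃ a : ℤ, w k = a := by
      intro k
      simp only [hwdef]
      split_ifs
      · exact ⟨0, by norm_num⟩
      · exact ⟨1, by norm_num⟩
    -- the value V w := ∑ w/nn
    have hVw : ∑ k, w k / nn e k ≤ 1 - coef (e+2) j + dlt e := by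
      rw [sum_div_nn he]
      have h1 : ∑ k, coef (e+2) k * w k = 1 - coef (e+2) j := by
        have h2 : ∀ k : Fin (e+2), coef (e+2) k * w k
            = coef (e+2) k - (if k = j then coef (e+2) k else 0) := by
          intro k
          simp only [hwdef]
          split_ifs <;> ring
        rw [Finset.sum_congr rfl (fun k _ => h2 k), Finset.sum_sub_distrib,
          Finset.sum_ite_eq' Finset.univ j, sum_coef he]
        simp
      rw [h1]
      have h3 : w (Fin.last (e+1)) ≤ 1 := by
        simp only [hwdef]
        split_ifs <;> norm_num
      nlinarith
    -- margin γ
    have hγ : 0 < coef (e+2) j - dlt e := by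
      have h1 := coef_ge he j
      have hA : (0:ℝ) < NR e * (NR e - 1) := by nlinarith
      have h2 : dlt e < (NR e - 2) / (NR e * (NR e - 1)) := by
        rw [dlt, div_lt_div_iff₀ (by nlinarith) hA]
        have h56 : 2 < (NR e - 2) * (NR e + 1) := by nlinarith
        nlinarith [mul_lt_mul_of_pos_left h56 hA]
      linarith
    set γ : ℝ := coef (e+2) j - dlt e with hγdef
    set S : ℝ := ((∑ k, w k / nn e k) - ∑ k, z k / nn e k) with hSdef
    set B : ℝ := Finset.univ.sup' Finset.univ_nonempty (fun k => |w k - z k|) with hBdef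
    have hBk : ∀ k, |w k - z k| ≤ B := fun k =>
      Finset.le_sup' (fun k => |w k - z k|) (Finset.mem_univ k)
    have hB0 : 0 ≤ B := le_trans (abs_nonneg _) (hBk j)
    set K : ℝ := |S| + B + 2 with hKdef
    have hK0 : 0 < K := by positivity
    set t : ℝ := min γ 1 / K with htdef
    have ht0 : 0 < t := by
      apply div_pos _ hK0
      exact lt_min hγ one_pos
    have htK : t * K = min γ 1 := div_mul_cancel₀ _ hK0.ne'
    have htS : t * |S| < γ := by
      have h1 : t * |S| ≤ t * (K - 2) := by
        apply mul_le_mul_of_nonneg_left _ ht0.le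
        rw [hKdef]; linarith
      have h2 : min γ 1 ≤ γ := min_le_left _ _
      nlinarith
    have htB : t * B < 1 := by
      have h1 : t * B ≤ t * (K - 2) := by
        apply mul_le_mul_of_nonneg_left _ ht0.le
        rw [hKdef]
        have := abs_nonneg S
        linarith
      have h2 : min γ 1 ≤ 1 := min_le_right _ _
      nlinarith
    apply main w t ht0 hwZ
    constructor
    · intro k
      by_cases hk : k = j
      · subst hk
        simp only [hwdef, if_pos rfl]
        nlinarith
      · simp only [hwdef, if_neg hk]
        have h1 : |1 - z k| ≤ B := by
          have := hBk k
          simp only [hwdef, if_neg hk] at this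
          exact this
        have h2 : -(t * B) ≤ t * (1 - z k) := by
          have h3 : -(1 - z k) ≤ |1 - z k| := neg_le_abs _
          nlinarith [mul_le_mul_of_nonneg_left h1 ht0.le,
            mul_le_mul_of_nonneg_left h3 ht0.le]
        linarith
    · rw [sum_div_comb he]
      have h4 : t * S ≤ t * |S| :=
        mul_le_mul_of_nonneg_left (le_abs_self S) ht0.le
      have h5 : ∑ k, w k / nn e k ≤ 1 - γ := by
        rw [hγdef] at *
        linarith
      rw [← hSdef]
      have hA1 : (∑ k, w k / nn e k) + t * S ≤ (1 - γ) + t * S := by linarith [h5]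
      have hA2 : t * S ≤ t * |S| := h4
      have hA3 : (1 - γ) + t * S ≤ (1 - γ) + t * |S| := by linarith [hA2]
      have hA4 : (1 - γ) + t * |S| < 1 := by linarith [htS]
      show (∑ k, w k / nn e k) + t * S < 1
      exact lt_of_le_of_lt (hA1.trans hA3) hA4
  · -- case (b): all coordinates nonnegative, so the sum must exceed 1
    push_neg at hneg
    have hH : 1 < ∑ k, coef (e+2) k * z k := by
      by_contra hle
      push_neg at hle
      exact hzD ⟨hneg, hle⟩
    have hkey := key_b he z hzZ hneg hH
    set H : ℝ := ∑ k, coef (e+2) k * z k with hHdef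
    set L : Fin (e+2) := Fin.last (e+1) with hLdef
    set R : ℝ := H - 1 + dlt e * z L - dlt e with hRdef
    have hlow := H_lower he z hzZ hH
    have hZL := hneg L
    have hR : dlt e * NR e ≤ R := by
      rw [hRdef]
      nlinarith
    have hR0 : 0 < R := by nlinarith
    set w : Fin (e+2) → ℝ := fun _ => 1 with hwdef
    have hwZ : ∀ k, ∃ a : ℤ, w k = a := fun k => ⟨1, by simp [hwdef]⟩
    have hVw : ∑ k, w k / nn e k = 1 + dlt e := by
      rw [sum_div_nn he]
      have h1 : ∑ k, coef (e+2) k * w k = 1 := by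
        simp only [hwdef, mul_one]
        exact sum_coef he
      rw [h1]
      simp [hwdef]
    have hVz : ∑ k, z k / nn e k = H + dlt e * z L := by
      rw [sum_div_nn he, hHdef, hLdef]
    -- conclusion template given suitable t
    have finish : ∀ t : ℝ, 0 < t → dlt e < t * R → (∀ k, 0 < 1 + t * (1 - z k)) →
        (interior Q ∩ intPts (e+2)).Nonempty := by
      intro t ht0 htR hpos
      apply main w t ht0 hwZ
      constructor
      · intro k
        simp only [hwdef]
        exact hpos k
      · rw [sum_div_comb he, hVw, hVz]
        have : 1 + dlt e + t * (1 + dlt e - (H + dlt e * z L)) = 1 + dlt e - t * R := by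
          rw [hRdef]; ring
        rw [this]
        linarith
    obtain ⟨k0, -, hk0⟩ := Finset.exists_mem_eq_sup' (Finset.univ_nonempty) z
    set B : ℝ := Finset.univ.sup' Finset.univ_nonempty z with hBdef
    have hBk : ∀ k, z k ≤ B := fun k => Finset.le_sup' z (Finset.mem_univ k)
    have hkeyB : dlt e * (B - 1) < R := by
      rw [hk0]
      exact hkey k0
    by_cases hB1 : B ≤ 1
    · apply finish (2 * dlt e / R)
      · exact div_pos (by linarith) hR0
      · rw [div_mul_eq_mul_div, mul_div_assoc, div_self hR0.ne', mul_one]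
        linarith
      · intro k
        have h1 : 0 ≤ 1 - z k := by
          have := hBk k; linarith
        have h2 : (0:ℝ) < 2 * dlt e / R := div_pos (by linarith) hR0
        have h3 := mul_nonneg h2.le h1
        linarith
    · push_neg at hB1
      have hB1' : 0 < B - 1 := by linarith
      have hdR : dlt e / R < 1 / (B - 1) := by
        rw [div_lt_div_iff₀ hR0 hB1', one_mul]
        exact hkeyB
      have hdR0 : 0 < dlt e / R := div_pos hdlt hR0
      apply finish ((dlt e / R + 1 / (B - 1)) / 2)
      · linarith
      · have h1 : dlt e / R < (dlt e / R + 1 / (B - 1)) / 2 := by linarith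
        calc dlt e = dlt e / R * R := by
              rw [div_mul_cancel₀ _ hR0.ne']
          _ < (dlt e / R + 1 / (B - 1)) / 2 * R := by
              apply mul_lt_mul_of_pos_right h1 hR0
      · intro k
        set t := (dlt e / R + 1 / (B - 1)) / 2 with htdef
        have ht2 : t < 1 / (B - 1) := by
          rw [htdef]; linarith
        have ht0 : 0 < t := by rw [htdef]; linarith
        have h3 : t * (B - 1) < 1 := by
          rw [lt_div_iff₀ hB1'] at ht2
          linarith [ht2]
        have h4 : t * (z k - 1) ≤ t * (B - 1) := by
          apply mul_le_mul_of_nonneg_left _ ht0.le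
          have := hBk k; linarith
        have h6 : t * (1 - z k) = -(t * (z k - 1)) := by ring
        linarith

end HullAux

/-- For `d ≥ 4`, the integer hull `Δ(d)_I` of `Δ(d)` is a full-dimensional hollow
lattice polytope, properly contained in `Δ(d)`, and maximal among hollow lattice
`d`-polytopes. -/
theorem integer_hull_maximal (d : ℕ) (hd : 4 ≤ d) :
    IsLatticePolytope (convexHull ℝ (DeltaPoly d ∩ intPts d)) ∧
    IsFullDim (convexHull ℝ (DeltaPoly d ∩ intPts d)) ∧
    Hollow (convexHull ℝ (DeltaPoly d ∩ intPts d)) ∧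
    convexHull ℝ (DeltaPoly d ∩ intPts d) ⊂ DeltaPoly d ∧
    ∀ Q : Set (Fin d → ℝ), IsLatticePolytope Q → IsFullDim Q →
      convexHull ℝ (DeltaPoly d ∩ intPts d) ⊂ Q → (interior Q ∩ intPts d).Nonempty := by
  obtain ⟨e, rfl⟩ : ∃ e, d = e + 2 := ⟨d - 2, by omega⟩
  have he : 2 ≤ e := by omega
  refine ⟨?_, ?_, ?_, ?_, ?_⟩
  · exact ⟨DeltaPoly (e+2) ∩ intPts (e+2), HullAux.V_finite he, ⟨0, HullAux.zero_mem⟩,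
      Set.inter_subset_right, rfl⟩
  · exact HullAux.full_dim he
  · show interior _ ∩ intPts (e+2) = ∅
    rw [Set.eq_empty_iff_forall_notMem]
    rintro x ⟨hx1, hx2⟩
    have h1 : interior (convexHull ℝ (DeltaPoly (e+2) ∩ intPts (e+2)))
        ⊆ interior (DeltaPoly (e+2)) := interior_mono HullAux.hull_sub_delta
    have h2 := HullAux.hollow_delta he
    rw [Set.eq_empty_iff_forall_notMem] at h2
    exact h2 x ⟨h1 hx1, hx2⟩
  · exact HullAux.strict_sub he
  · intro Q hQlat hQfull hQss
    obtain ⟨V', hfin, hne, hlat, hQeq⟩ := hQlat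
    have hQconv : Convex ℝ Q := hQeq ▸ convex_convexHull ℝ V'
    have hzexists : ∃ z ∈ V', z ∉ DeltaPoly (e+2) := by
      by_contra hc
      push_neg at hc
      have hsub2 : V' ⊆ DeltaPoly (e+2) ∩ intPts (e+2) := fun v hv => ⟨hc v hv, hlat hv⟩
      have hQsub3 : Q ⊆ convexHull ℝ (DeltaPoly (e+2) ∩ intPts (e+2)) := by
        rw [hQeq]
        exact convexHull_mono hsub2
      exact hQss.not_subset hQsub3
    obtain ⟨z, hzV, hzD⟩ := hzexists
    have hzQ : z ∈ Q := hQeq ▸ subset_convexHull ℝ V' hzV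
    have hzZ : z ∈ intPts (e+2) := hlat hzV
    exact HullAux.maximal_aux he Q hQconv hQss.subset z hzQ hzZ hzD
end
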